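/- arXiv:2407.02624 — 5 statements merged into one kernel-verified Lean document; each statement's English description precedes it below -/
import Mathlib

section
/- For any information graph G = (V, E, α) and any three vertices u, v, w of G, the proximities satisfy the multiplicative triangle inequality prox_G(u, v) ≥ prox_G(u, w) · prox_G(w, v). Consequently, the function φ(u, v) = −log prox_G(u, v) satisfies the triangle inequality, so (V, φ) is a (pseudo)metric space, called the implied metric of G. -/
open scoped Classical

variable {V : Type*} [Fintype V] [DecidableEq V]

/-- The proximity of `u` and `v` in the information graph `(V, E, α)`: the probability
that `u` and `v` are connected in a graph obtained by retaining each edge of `E`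
independently with probability `α`. -/
noncomputable def prox (E : Finset (Sym2 V)) (α : ℝ) (u v : V) : ℝ :=
  ∑ F ∈ E.powerset,
    if (SimpleGraph.fromEdgeSet (F : Set (Sym2 V))).Reachable u v then
      α ^ F.card * (1 - α) ^ (E \ F).card
    else 0

/-- The broadcast of an information graph: the minimum proximity over pairs of distinct
vertices. -/
noncomputable def broadcast (E : Finset (Sym2 V)) (α : ℝ) : ℝ :=
  ⨅ p : {p : V × V // p.1 ≠ p.2}, prox E α p.1.1 p.1.2

/-- The optimum broadcast achievable by adding at most `k` vertex pairs disjoint from `E`. -/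
noncomputable def optBroadcast (E : Finset (Sym2 V)) (α : ℝ) (k : ℕ) : ℝ :=
  ⨆ F : {F : Finset (Sym2 V) // F.card ≤ k ∧ ∀ e ∈ F, e ∉ E}, broadcast (E ∪ F.1) α

/-- The reach of a vertex `v`: the minimum proximity of `v` to any other vertex. -/
noncomputable def reach (E : Finset (Sym2 V)) (α : ℝ) (v : V) : ℝ :=
  ⨅ u : {u : V // u ≠ v}, prox E α v u.1

/-- The optimum reach of a source vertex `vs` achievable by adding at most `k`
vertex pairs disjoint from `E`. -/
noncomputable def optReach (E : Finset (Sym2 V)) (α : ℝ) (k : ℕ) (vs : V) : ℝ :=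
  ⨆ F : {F : Finset (Sym2 V) // F.card ≤ k ∧ ∀ e ∈ F, e ∉ E}, reach (E ∪ F.1) α vs

/-- The probability that, in a sampled graph, all edges of at least one member of the
family `P` of edge-lists are retained. -/
noncomputable def prPaths (E : Finset (Sym2 V)) (α : ℝ) (P : Set (List (Sym2 V))) : ℝ :=
  ∑ F ∈ E.powerset,
    if ∃ p ∈ P, ∀ e ∈ p, e ∈ F then α ^ F.card * (1 - α) ^ (E \ F).card
    else 0


section Aux

variable (E : Finset (Sym2 V))

private noncomputable def embE : {e : Sym2 V // e ∈ E} ↪ Sym2 V :=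
  Function.Embedding.subtype _

private lemma sum_powerset_eq (h : Finset (Sym2 V) → ℝ) :
    ∑ F ∈ E.powerset, h F = ∑ S : Finset {e : Sym2 V // e ∈ E}, h (S.map (embE E)) := by
  rw [← Finset.sum_attach]
  refine Finset.sum_bij' (fun F _ => (F : Finset (Sym2 V)).subtype (· ∈ E))
    (fun S _ => ⟨S.map (embE E), ?_⟩) (fun _ _ => Finset.mem_univ _)
    (fun _ _ => Finset.mem_attach _ _) ?_ ?_ ?_
  · rw [Finset.mem_powerset]
    intro x hx
    obtain ⟨y, _, rfl⟩ := Finset.mem_map.1 hx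
    exact y.2
  · rintro ⟨F, hF⟩ _
    ext x
    simpa [embE] using fun hx => Finset.mem_powerset.1 hF hx
  · intro S _
    ext x
    simp [embE]
  · rintro ⟨F, hF⟩ _
    exact congrArg h (Finset.subtype_map_of_mem fun x hx => Finset.mem_powerset.1 hF hx).symm

private lemma map_emb_subset (S : Finset {e : Sym2 V // e ∈ E}) : S.map (embE E) ⊆ E := by
  intro x hx
  obtain ⟨y, _, rfl⟩ := Finset.mem_map.1 hx
  exact y.2

private lemma card_sdiff_map (S : Finset {e : Sym2 V // e ∈ E}) :
    (E \ S.map (embE E)).card = E.card - S.card := by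
  rw [Finset.card_sdiff_of_subset (map_emb_subset E S), Finset.card_map]

end Aux

/-- multiplicative triangle inequality for proximity, and the
resulting triangle inequality for the implied metric `φ(u,v) = -log prox(u,v)`
(stated for pairs with positive proximity, as is the case e.g. when `G` is
connected and `α > 0`). -/
theorem prox_mul_triangle_and_implied_metric
    (E : Finset (Sym2 V)) (α : ℝ) (hα0 : 0 ≤ α) (hα1 : α ≤ 1) :
    (∀ u v w : V, prox E α u w * prox E α w v ≤ prox E α u v) ∧
    (∀ u v w : V, 0 < prox E α u w → 0 < prox E α w v →
      -Real.log (prox E α u v) ≤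
        -Real.log (prox E α u w) + -Real.log (prox E α w v)) := by
  classical
  have key : ∀ u v w : V, prox E α u w * prox E α w v ≤ prox E α u v := by
    intro u v w
    set β := {e : Sym2 V // e ∈ E}
    set μ : Finset β → ℝ := fun S => α ^ S.card * (1 - α) ^ (E.card - S.card) with hμdef
    have hcard : ∀ S : Finset β, S.card ≤ E.card := fun S =>
      (Finset.card_le_univ S).trans_eq (Fintype.card_coe E)
    set ind : V → V → Finset β → ℝ := fun a b S =>
      if (SimpleGraph.fromEdgeSet ((S.map (embE E) : Finset (Sym2 V)) : Set (Sym2 V))).Reachable a b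
        then 1 else 0 with hinddef
    have hprox : ∀ a b : V, prox E α a b = ∑ S : Finset β, μ S * ind a b S := by
      intro a b
      rw [prox, sum_powerset_eq E]
      refine Finset.sum_congr rfl fun S _ => ?_
      rw [hμdef, hinddef]
      simp only [Finset.card_map, card_sdiff_map E S]
      split_ifs with hR <;> ring
    have hμ0 : 0 ≤ μ := fun S => mul_nonneg (pow_nonneg hα0 _) (pow_nonneg (by linarith) _)
    have hind0 : ∀ a b, (0 : Finset β → ℝ) ≤ ind a b := by
      intro a b S; rw [hinddef]; dsimp only; split <;> norm_num
    have hmono : ∀ a b, Monotone (ind a b) := by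
      intro a b S T hST
      rw [hinddef]; dsimp only
      split
      · rename_i h
        rw [if_pos (h.mono (SimpleGraph.fromEdgeSet_mono (by
            exact_mod_cast Finset.map_subset_map.2 hST)))]
      · split <;> norm_num
    have hμlog : ∀ S T : Finset β, μ S * μ T ≤ μ (S ⊓ T) * μ (S ⊔ T) := by
      intro S T
      have h1 : (S ⊓ T).card + (S ⊔ T).card = S.card + T.card := by
        simpa [add_comm] using Finset.card_union_add_card_inter S T
      have h2 := hcard S; have h3 := hcard T
      have h4 := hcard (S ⊓ T); have h5 := hcard (S ⊔ T)
      rw [hμdef]; dsimp only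
      rw [mul_mul_mul_comm, mul_mul_mul_comm (α ^ (S ⊓ T).card), ← pow_add, ← pow_add,
        ← pow_add, ← pow_add]
      have e1 : (S ⊓ T).card + (S ⊔ T).card = S.card + T.card := h1
      have e2 : E.card - (S ⊓ T).card + (E.card - (S ⊔ T).card)
          = E.card - S.card + (E.card - T.card) := by omega
      rw [e1, e2]
    have hfkg := fkg (μ := μ) (f := ind u w) (g := ind w v) hμ0 (hind0 u w) (hind0 w v)
      (hmono u w) (hmono w v) hμlog
    have hsum1 : ∑ S : Finset β, μ S = 1 := by
      rw [hμdef]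
      have h1 := (sum_powerset_eq E (fun F => α ^ F.card * (1 - α) ^ (E \ F).card)).symm
      simp only [Finset.card_map, card_sdiff_map E] at h1
      rw [h1]
      calc ∑ F ∈ E.powerset, α ^ F.card * (1 - α) ^ (E \ F).card
          = ∏ _e ∈ E, (α + (1 - α)) := by
            rw [Finset.prod_add]
            refine Finset.sum_congr rfl fun F hF => ?_
            rw [Finset.prod_const, Finset.prod_const]
        _ = 1 := by simp
    have hle : ∑ S : Finset β, μ S * (ind u w S * ind w v S)
        ≤ ∑ S : Finset β, μ S * ind u v S := by
      refine Finset.sum_le_sum fun S _ => ?_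
      refine mul_le_mul_of_nonneg_left ?_ (hμ0 S)
      simp only [hinddef]
      split_ifs with ha hb hc <;> try norm_num
      exact absurd (ha.trans hb) (by assumption)
    calc prox E α u w * prox E α w v
        = (∑ S : Finset β, μ S * ind u w S) * ∑ S : Finset β, μ S * ind w v S := by
          rw [hprox, hprox]
      _ ≤ (∑ S : Finset β, μ S) * ∑ S : Finset β, μ S * (ind u w S * ind w v S) := hfkg
      _ = ∑ S : Finset β, μ S * (ind u w S * ind w v S) := by rw [hsum1, one_mul]
      _ ≤ ∑ S : Finset β, μ S * ind u v S := hle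
      _ = prox E α u v := (hprox u v).symm
  refine ⟨key, fun u v w h1 h2 => ?_⟩
  have hprod : 0 < prox E α u w * prox E α w v := mul_pos h1 h2
  have hlog := Real.log_le_log hprod (key u v w)
  rw [Real.log_mul (ne_of_gt h1) (ne_of_gt h2)] at hlog
  linarith
end

section
/- Ball-growing lemma: Let G = (V, E, α) be an information graph, let x ≥ 0, and let v, u be vertices with prox_G(v, u) < x. Suppose an augmented information graph G' = G + S is formed by adding a set S of k new edges, all of whose endpoints w satisfy prox_G(v, w) < x (i.e., the endpoints are disjoint from the x-neighborhood N_x(v) = {w : prox_G(v, w) ≥ x}). Then prox_{G'}(v, u) ≤ x(1 + 2kα). -/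
open scoped Classical

variable {V : Type*} [Fintype V] [DecidableEq V]

set_option linter.unusedVariables false

/-- weight of a subset -/
noncomputable def bgW (α : ℝ) (T F : Finset (Sym2 V)) : ℝ :=
  α ^ F.card * (1 - α) ^ (T \ F).card

noncomputable def bgChi (α : ℝ) (A : Finset (Sym2 V)) (v a : V) : ℝ :=
  if (SimpleGraph.fromEdgeSet (A : Set (Sym2 V))).Reachable v a then 1 else 0

noncomputable def bgF (α : ℝ) (A : Finset (Sym2 V)) (v : V) (e : Sym2 V) : ℝ :=
  ∑ a ∈ Finset.univ.filter (fun a => a ∈ e), bgChi α A v a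

lemma bgW_nonneg {α : ℝ} (hα0 : 0 ≤ α) (hα1 : α ≤ 1) (T F : Finset (Sym2 V)) :
    0 ≤ bgW α T F :=
  mul_nonneg (pow_nonneg hα0 _) (pow_nonneg (by linarith) _)

lemma bgChi_nonneg (α : ℝ) (A : Finset (Sym2 V)) (v a : V) : 0 ≤ bgChi α A v a := by
  unfold bgChi; split_ifs <;> norm_num

lemma bgF_nonneg (α : ℝ) (A : Finset (Sym2 V)) (v : V) (e : Sym2 V) : 0 ≤ bgF α A v e :=
  Finset.sum_nonneg fun a _ => bgChi_nonneg α A v a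

lemma bg_sum_w (α : ℝ) (T : Finset (Sym2 V)) :
    ∑ F ∈ T.powerset, bgW α T F = 1 := by
  have h := Finset.prod_add (fun _ : Sym2 V => α) (fun _ : Sym2 V => 1 - α) T
  simp only [Finset.prod_const] at h
  unfold bgW
  rw [← h]
  norm_num

lemma bg_sum_w_mem (α : ℝ) (T : Finset (Sym2 V)) {e : Sym2 V} (he : e ∈ T) :
    ∑ B ∈ T.powerset.filter (fun B => e ∈ B), bgW α T B = α := by
  have main : ∑ B ∈ T.powerset.filter (fun B => e ∈ B), bgW α T B
      = ∑ C ∈ (T.erase e).powerset, α * bgW α (T.erase e) C := by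
    refine Finset.sum_nbij' (i := fun B => B.erase e) (j := fun C => insert e C)
      ?_ ?_ ?_ ?_ ?_
    · intro B hB
      simp only [Finset.mem_filter, Finset.mem_powerset] at hB ⊢
      exact Finset.erase_subset_erase e hB.1
    · intro C hC
      simp only [Finset.mem_powerset] at hC
      simp only [Finset.mem_filter, Finset.mem_powerset]
      exact ⟨Finset.insert_subset he (hC.trans (Finset.erase_subset e T)),
        Finset.mem_insert_self e C⟩
    · intro B hB
      simp only [Finset.mem_filter] at hB
      exact Finset.insert_erase hB.2
    · intro C hC
      simp only [Finset.mem_powerset] at hC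
      exact Finset.erase_insert (fun h => (Finset.notMem_erase e T) (hC h))
    · intro B hB
      simp only [Finset.mem_filter, Finset.mem_powerset] at hB
      obtain ⟨hBT, heB⟩ := hB
      have hcard : B.card = (B.erase e).card + 1 := by
        rw [Finset.card_erase_of_mem heB]
        have := Finset.card_pos.2 ⟨e, heB⟩
        omega
      have hsd : T \ B = (T.erase e) \ (B.erase e) := by
        ext y
        simp only [Finset.mem_sdiff, Finset.mem_erase]
        constructor
        · rintro ⟨hyT, hyB⟩
          exact ⟨⟨fun h => hyB (h ▸ heB), hyT⟩, fun h => hyB h.2⟩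
        · rintro ⟨⟨hye, hyT⟩, hy⟩
          exact ⟨hyT, fun h => hy ⟨hye, h⟩⟩
      unfold bgW
      rw [hcard, hsd, pow_succ]
      ring
  rw [main, ← Finset.mul_sum, bg_sum_w, mul_one]

lemma bg_reach_split (A B : Finset (Sym2 V)) (v u : V)
    (h : (SimpleGraph.fromEdgeSet ((A ∪ B : Finset (Sym2 V)) : Set (Sym2 V))).Reachable v u) :
    (SimpleGraph.fromEdgeSet (A : Set (Sym2 V))).Reachable v u ∨
      ∃ e ∈ B, ∃ w ∈ e, (SimpleGraph.fromEdgeSet (A : Set (Sym2 V))).Reachable v w := by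
  obtain ⟨p⟩ := h
  induction p with
  | nil => exact Or.inl (SimpleGraph.Reachable.refl _)
  | @cons a b c h p ih =>
    rw [SimpleGraph.fromEdgeSet_adj] at h
    obtain ⟨hmem, hne⟩ := h
    rw [Finset.coe_union, Set.mem_union] at hmem
    rcases hmem with hA | hB
    · have hadj : (SimpleGraph.fromEdgeSet (A : Set (Sym2 V))).Adj a b :=
        (SimpleGraph.fromEdgeSet_adj _).2 ⟨hA, hne⟩
      rcases ih with h1 | ⟨e, he, w, hw, hr⟩
      · exact Or.inl (hadj.reachable.trans h1)
      · exact Or.inr ⟨e, he, w, hw, hadj.reachable.trans hr⟩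
    · exact Or.inr ⟨s(a, b), hB, a, Sym2.mem_mk_left a b, SimpleGraph.Reachable.refl _⟩

lemma bg_prox (E : Finset (Sym2 V)) (α : ℝ) (v a : V) :
    ∑ A ∈ E.powerset, bgW α E A * bgChi α A v a = prox E α v a := by
  rw [prox]
  refine Finset.sum_congr rfl fun A _ => ?_
  unfold bgW bgChi
  split_ifs <;> simp

lemma bg_card_mem (e : Sym2 V) :
    (Finset.univ.filter (fun a : V => a ∈ e)).card ≤ 2 := by
  induction e with
  | _ a b =>
    have hsub : Finset.univ.filter (fun w : V => w ∈ s(a, b)) ⊆ {a, b} := by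
      intro w hw
      simp only [Finset.mem_filter, Sym2.mem_iff] at hw
      simp only [Finset.mem_insert, Finset.mem_singleton]
      tauto
    calc (Finset.univ.filter (fun w : V => w ∈ s(a, b))).card
        ≤ ({a, b} : Finset V).card := Finset.card_le_card hsub
      _ ≤ 2 := (Finset.card_insert_le a {b}).trans (by simp)

lemma bg_stepA (E S : Finset (Sym2 V)) (α : ℝ) (v u : V) (hdisj : Disjoint E S) :
    prox (E ∪ S) α v u = ∑ A ∈ E.powerset, ∑ B ∈ S.powerset,
      (if (SimpleGraph.fromEdgeSet ((A ∪ B : Finset (Sym2 V)) : Set (Sym2 V))).Reachable v u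
        then bgW α E A * bgW α S B else 0) := by
  have hd : ∀ y : Sym2 V, y ∈ E → y ∈ S → False :=
    fun y hyE hyS => (Finset.disjoint_left.1 hdisj hyE) hyS
  rw [prox, ← Finset.sum_product']
  refine (Finset.sum_nbij' (i := fun p : Finset (Sym2 V) × Finset (Sym2 V) => p.1 ∪ p.2)
    (j := fun F => (F ∩ E, F ∩ S)) ?_ ?_ ?_ ?_ ?_).symm
  · intro p hp
    rw [Finset.mem_product, Finset.mem_powerset, Finset.mem_powerset] at hp
    rw [Finset.mem_powerset]
    exact Finset.union_subset_union hp.1 hp.2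
  · intro F hF
    rw [Finset.mem_product, Finset.mem_powerset, Finset.mem_powerset]
    exact ⟨Finset.inter_subset_right, Finset.inter_subset_right⟩
  · rintro ⟨A, B⟩ hp
    rw [Finset.mem_product, Finset.mem_powerset, Finset.mem_powerset] at hp
    obtain ⟨hA, hB⟩ := hp
    have h1 : (A ∪ B) ∩ E = A := by
      ext y
      simp only [Finset.mem_inter, Finset.mem_union]
      constructor
      · rintro ⟨hy1 | hy2, hyE⟩
        · exact hy1
        · exact absurd (hd y hyE (hB hy2)) (fun h => h)
      · intro hy
        exact ⟨Or.inl hy, hA hy⟩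
    have h2 : (A ∪ B) ∩ S = B := by
      ext y
      simp only [Finset.mem_inter, Finset.mem_union]
      constructor
      · rintro ⟨hy1 | hy2, hyS⟩
        · exact absurd (hd y (hA hy1) hyS) (fun h => h)
        · exact hy2
      · intro hy
        exact ⟨Or.inr hy, hB hy⟩
    simp only [h1, h2]
  · intro F hF
    rw [Finset.mem_powerset] at hF
    simp only
    rw [← Finset.inter_union_distrib_left, Finset.inter_eq_left.2 hF]
  · rintro ⟨A, B⟩ hp
    rw [Finset.mem_product, Finset.mem_powerset, Finset.mem_powerset] at hp
    obtain ⟨hA, hB⟩ := hp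
    simp only
    have hw : bgW α E A * bgW α S B = α ^ (A ∪ B).card * (1 - α) ^ ((E ∪ S) \ (A ∪ B)).card := by
      have hAB : Disjoint A B := hdisj.mono hA hB
      have hsd : (E ∪ S) \ (A ∪ B) = (E \ A) ∪ (S \ B) := by
        ext y
        simp only [Finset.mem_sdiff, Finset.mem_union]
        constructor
        · rintro ⟨hy1 | hy2, hy3⟩
          · exact Or.inl ⟨hy1, fun h => hy3 (Or.inl h)⟩
          · exact Or.inr ⟨hy2, fun h => hy3 (Or.inr h)⟩
        · rintro (⟨hy1, hy2⟩ | ⟨hy1, hy2⟩)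
          · refine ⟨Or.inl hy1, ?_⟩
            rintro (h | h)
            · exact hy2 h
            · exact hd y hy1 (hB h)
          · refine ⟨Or.inr hy1, ?_⟩
            rintro (h | h)
            · exact hd y (hA h) hy1
            · exact hy2 h
      have hsdd : Disjoint (E \ A) (S \ B) :=
        hdisj.mono (Finset.sdiff_subset) (Finset.sdiff_subset)
      rw [Finset.card_union_of_disjoint hAB, hsd, Finset.card_union_of_disjoint hsdd]
      unfold bgW
      rw [pow_add, pow_add]
      ring
    rw [hw]

lemma bg_inner (S : Finset (Sym2 V)) (α : ℝ) (A : Finset (Sym2 V)) (v : V) :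
    ∑ B ∈ S.powerset, bgW α S B * ∑ e ∈ B, bgF α A v e
      = ∑ e ∈ S, α * bgF α A v e := by
  have step1 : ∀ B ∈ S.powerset, bgW α S B * ∑ e ∈ B, bgF α A v e
      = ∑ e ∈ S, (if e ∈ B then bgW α S B * bgF α A v e else 0) := by
    intro B hB
    rw [Finset.sum_ite_mem, Finset.inter_eq_right.2 (Finset.mem_powerset.1 hB),
      Finset.mul_sum]
  rw [Finset.sum_congr rfl step1, Finset.sum_comm]
  refine Finset.sum_congr rfl fun e he => ?_
  rw [← Finset.sum_filter, ← Finset.sum_mul, bg_sum_w_mem α S he]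

/-- ball-growing lemma. Adding `k` edges whose endpoints all lie
outside the `x`-neighborhood of `v` increases the proximity of `v` to `u` to at
most `x(1 + 2kα)`. -/
theorem ball_growing
    (E : Finset (Sym2 V)) (α : ℝ) (hα0 : 0 ≤ α) (hα1 : α ≤ 1)
    (x : ℝ) (hx : 0 ≤ x) (v u : V) (hvu : prox E α v u < x)
    (k : ℕ) (S : Finset (Sym2 V)) (hcard : S.card = k) (hnew : ∀ e ∈ S, e ∉ E)
    (hfar : ∀ e ∈ S, ∀ w ∈ e, prox E α v w < x) :
    prox (E ∪ S) α v u ≤ x * (1 + 2 * (k : ℝ) * α) := by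
  classical
  have hdisj : Disjoint E S := Finset.disjoint_left.2 fun {e} heE heS => hnew e heS heE
  -- pointwise bound
  have pointwise : ∀ A ∈ E.powerset, ∀ B ∈ S.powerset,
      (if (SimpleGraph.fromEdgeSet ((A ∪ B : Finset (Sym2 V)) : Set (Sym2 V))).Reachable v u
        then bgW α E A * bgW α S B else 0)
      ≤ bgW α E A * bgW α S B * (bgChi α A v u + ∑ e ∈ B, bgF α A v e) := by
    intro A hA B hB
    have hww : 0 ≤ bgW α E A * bgW α S B :=
      mul_nonneg (bgW_nonneg hα0 hα1 E A) (bgW_nonneg hα0 hα1 S B)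
    have hbr : 0 ≤ bgChi α A v u + ∑ e ∈ B, bgF α A v e :=
      add_nonneg (bgChi_nonneg α A v u) (Finset.sum_nonneg fun e _ => bgF_nonneg α A v e)
    split_ifs with hreach
    · have h1 : 1 ≤ bgChi α A v u + ∑ e ∈ B, bgF α A v e := by
        rcases bg_reach_split A B v u hreach with hr | ⟨e, he, w, hw, hr⟩
        · have hc : bgChi α A v u = 1 := if_pos hr
          have := Finset.sum_nonneg fun e (_ : e ∈ B) => bgF_nonneg α A v e
          linarith
        · have hcw : bgChi α A v w = 1 := if_pos hr
          have hfe : 1 ≤ bgF α A v e := by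
            have hw' : w ∈ Finset.univ.filter (fun a => a ∈ e) := by
              simp [hw]
            calc (1 : ℝ) = bgChi α A v w := hcw.symm
              _ ≤ bgF α A v e :=
                Finset.single_le_sum (fun a _ => bgChi_nonneg α A v a) hw'
          have h2 : bgF α A v e ≤ ∑ e' ∈ B, bgF α A v e' :=
            Finset.single_le_sum (fun e' _ => bgF_nonneg α A v e') he
          have := bgChi_nonneg α A v u
          linarith
      calc bgW α E A * bgW α S B = bgW α E A * bgW α S B * 1 := (mul_one _).symm
        _ ≤ _ := mul_le_mul_of_nonneg_left h1 hww
    · exact mul_nonneg hww hbr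
  -- key bound
  have key : prox (E ∪ S) α v u
      ≤ (∑ A ∈ E.powerset, bgW α E A * bgChi α A v u)
        + α * ∑ e ∈ S, ∑ A ∈ E.powerset, bgW α E A * bgF α A v e := by
    rw [bg_stepA E S α v u hdisj]
    have step1 : ∑ A ∈ E.powerset, ∑ B ∈ S.powerset,
        (if (SimpleGraph.fromEdgeSet ((A ∪ B : Finset (Sym2 V)) : Set (Sym2 V))).Reachable v u
          then bgW α E A * bgW α S B else 0)
        ≤ ∑ A ∈ E.powerset, ∑ B ∈ S.powerset,
            bgW α E A * bgW α S B * (bgChi α A v u + ∑ e ∈ B, bgF α A v e) :=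
      Finset.sum_le_sum fun A hA => Finset.sum_le_sum fun B hB => pointwise A hA B hB
    refine step1.trans (le_of_eq ?_)
    have expand : ∀ A ∈ E.powerset,
        ∑ B ∈ S.powerset, bgW α E A * bgW α S B * (bgChi α A v u + ∑ e ∈ B, bgF α A v e)
        = bgW α E A * bgChi α A v u + bgW α E A * ∑ e ∈ S, α * bgF α A v e := by
      intro A hA
      have : ∀ B ∈ S.powerset,
          bgW α E A * bgW α S B * (bgChi α A v u + ∑ e ∈ B, bgF α A v e)
          = (bgW α E A * bgChi α A v u) * bgW α S B
            + bgW α E A * (bgW α S B * ∑ e ∈ B, bgF α A v e) := by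
        intro B _
        ring
      rw [Finset.sum_congr rfl this, Finset.sum_add_distrib, ← Finset.mul_sum,
        ← Finset.mul_sum]
      rw [bg_sum_w α S, mul_one, bg_inner S α A v]
    rw [Finset.sum_congr rfl expand, Finset.sum_add_distrib]
    congr 1
    have h3 : ∀ A ∈ E.powerset, bgW α E A * ∑ e ∈ S, α * bgF α A v e
        = ∑ e ∈ S, α * (bgW α E A * bgF α A v e) := by
      intro A _
      rw [Finset.mul_sum]
      exact Finset.sum_congr rfl fun e _ => by ring
    rw [Finset.sum_congr rfl h3, Finset.sum_comm, Finset.mul_sum]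
    exact Finset.sum_congr rfl fun e _ => by rw [Finset.mul_sum]
  -- bound the two parts
  have part1 : (∑ A ∈ E.powerset, bgW α E A * bgChi α A v u) ≤ x := by
    rw [bg_prox]; exact le_of_lt hvu
  have part2 : ∀ e ∈ S, ∑ A ∈ E.powerset, bgW α E A * bgF α A v e ≤ 2 * x := by
    intro e he
    have hswap : ∑ A ∈ E.powerset, bgW α E A * bgF α A v e
        = ∑ a ∈ Finset.univ.filter (fun a => a ∈ e), prox E α v a := by
      unfold bgF
      rw [Finset.sum_congr rfl fun A (_ : A ∈ E.powerset) => Finset.mul_sum _ _ _,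
        Finset.sum_comm]
      exact Finset.sum_congr rfl fun a _ => bg_prox E α v a
    rw [hswap]
    calc ∑ a ∈ Finset.univ.filter (fun a => a ∈ e), prox E α v a
        ≤ ∑ a ∈ Finset.univ.filter (fun a => a ∈ e), x := by
          refine Finset.sum_le_sum fun a ha => ?_
          simp only [Finset.mem_filter] at ha
          exact le_of_lt (hfar e he a ha.2)
      _ = (Finset.univ.filter (fun a => a ∈ e)).card * x := by
          rw [Finset.sum_const, nsmul_eq_mul]
      _ ≤ 2 * x := by
          have := bg_card_mem (V := V) e
          have h2 : ((Finset.univ.filter (fun a => a ∈ e)).card : ℝ) ≤ 2 := by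
            exact_mod_cast this
          nlinarith
  have part2' : ∑ e ∈ S, ∑ A ∈ E.powerset, bgW α E A * bgF α A v e ≤ (k : ℝ) * (2 * x) := by
    calc ∑ e ∈ S, ∑ A ∈ E.powerset, bgW α E A * bgF α A v e
        ≤ ∑ _e ∈ S, 2 * x := Finset.sum_le_sum fun e he => part2 e he
      _ = (S.card : ℝ) * (2 * x) := by rw [Finset.sum_const, nsmul_eq_mul]
      _ = (k : ℝ) * (2 * x) := by rw [hcard]
  have final : α * ∑ e ∈ S, ∑ A ∈ E.powerset, bgW α E A * bgF α A v e
      ≤ α * ((k : ℝ) * (2 * x)) := mul_le_mul_of_nonneg_left part2' hα0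
  calc prox (E ∪ S) α v u ≤ _ := key
    _ ≤ x + α * ((k : ℝ) * (2 * x)) := add_le_add part1 final
    _ = x * (1 + 2 * (k : ℝ) * α) := by ring
end

section
/- Weak fundamental inequality: Let G = (V, E, α) be an information graph, let i, j, u ∈ V be three vertices, and let 0 ≤ β ≤ 1. Let P_u be a set of simple paths from i to j in G, all of which pass through the vertex u, and let P_0 be another set of paths from i to j in G such that P_u ∩ P_0 = ∅ and Pr[P_u ∪ P_0] ≥ β. Suppose that Pr[P_0] ≤ β/2. Then Pr[P_u[i, u]] · Pr[P_u[u, j]] ≥ β/2, where P_u[i, u] is the set of segments p[i, u] (the portion of p from i to u) for p ∈ P_u, and P_u[u, j] is the set of segments p[u, j] for p ∈ P_u. -/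
open scoped Classical


namespace BKAux

variable {ι : Type*} [DecidableEq ι]

noncomputable def w (E : Finset ι) (α : ℝ) (F : Finset ι) : ℝ :=
  α ^ F.card * (1 - α) ^ (E \ F).card

lemma w_nonneg {α : ℝ} (h0 : 0 ≤ α) (h1 : α ≤ 1) (E F : Finset ι) : 0 ≤ w E α F :=
  mul_nonneg (pow_nonneg h0 _) (pow_nonneg (by linarith) _)

lemma sum_w (E : Finset ι) (α : ℝ) : ∑ F ∈ E.powerset, w E α F = 1 := by
  unfold w
  have h := Finset.prod_add (fun _ : ι => α) (fun _ => 1 - α) E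
  simp [Finset.prod_const] at h
  rw [← h]

noncomputable def PrP (E : Finset ι) (α : ℝ) (P : Finset ι → Prop) : ℝ :=
  ∑ F ∈ E.powerset, if P F then w E α F else 0

lemma PrP_nonneg {α : ℝ} (h0 : 0 ≤ α) (h1 : α ≤ 1) (E : Finset ι) (P : Finset ι → Prop) :
    0 ≤ PrP E α P :=
  Finset.sum_nonneg fun F _ => by
    by_cases h : P F <;> simp [h, w_nonneg h0 h1]

lemma PrP_mono {α : ℝ} (h0 : 0 ≤ α) (h1 : α ≤ 1) (E : Finset ι) {P Q : Finset ι → Prop}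
    (h : ∀ F ∈ E.powerset, P F → Q F) : PrP E α P ≤ PrP E α Q :=
  Finset.sum_le_sum fun F hF => by
    by_cases hp : P F
    · simp only [hp, if_true, h F hF hp, if_true]; exact le_refl _
    · simp only [hp, if_false]
      by_cases hq : Q F <;> simp [hq, w_nonneg h0 h1]

lemma PrP_congr {α : ℝ} (E : Finset ι) {P Q : Finset ι → Prop}
    (h : ∀ F ∈ E.powerset, (P F ↔ Q F)) : PrP E α P = PrP E α Q :=
  Finset.sum_congr rfl fun F hF => by rw [if_congr (h F hF) rfl rfl]

lemma PrP_union_le {α : ℝ} (h0 : 0 ≤ α) (h1 : α ≤ 1) (E : Finset ι) (P Q : Finset ι → Prop) :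
    PrP E α (fun F => P F ∨ Q F) ≤ PrP E α P + PrP E α Q := by
  rw [PrP, PrP, PrP, ← Finset.sum_add_distrib]
  refine Finset.sum_le_sum fun F _ => ?_
  have := w_nonneg h0 h1 E F
  by_cases hp : P F <;> by_cases hq : Q F <;> simp [hp, hq] <;> linarith

def occ (A : Set (Finset ι)) (F : Finset ι) : Prop := ∃ S ∈ A, S ⊆ F

def hyb (K F F' : Finset ι) : Finset ι := (F \ K) ∪ (F' ∩ K)

def D (A B : Set (Finset ι)) (K F F' : Finset ι) : Prop :=
  ∃ S ∈ A, ∃ T ∈ B, Disjoint S T ∧ S ⊆ F ∧ T ⊆ hyb K F F'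

def dstar (A B : Set (Finset ι)) (F : Finset ι) : Prop :=
  ∃ S ∈ A, ∃ T ∈ B, Disjoint S T ∧ S ⊆ F ∧ T ⊆ F

noncomputable def P2 (E : Finset ι) (α : ℝ) (A B : Set (Finset ι)) (K : Finset ι) : ℝ :=
  ∑ F ∈ E.powerset, ∑ F' ∈ E.powerset,
    if D A B K F F' then w E α F * w E α F' else 0

lemma mem_hyb {K F F' : Finset ι} {x : ι} :
    x ∈ hyb K F F' ↔ (x ∈ F ∧ x ∉ K) ∨ (x ∈ F' ∧ x ∈ K) := by
  simp [hyb, and_comm]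

def sw1 (e : ι) (F F' : Finset ι) : Finset ι := (F.erase e) ∪ (F' ∩ {e})

lemma mem_sw1 {e x : ι} {F F' : Finset ι} :
    x ∈ sw1 e F F' ↔ (x ∈ F ∧ x ≠ e) ∨ (x ∈ F' ∧ x = e) := by
  simp [sw1, and_comm]

lemma sw1_subset {e : ι} {E F F' : Finset ι} (hF : F ⊆ E) (hF' : F' ⊆ E) :
    sw1 e F F' ⊆ E := by
  intro x hx
  rcases mem_sw1.1 hx with ⟨h, _⟩ | ⟨h, _⟩
  · exact hF h
  · exact hF' h

lemma sw1_sw1 (e : ι) (F F' : Finset ι) : sw1 e (sw1 e F F') (sw1 e F' F) = F := by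
  ext x; by_cases hx : x = e <;> simp [mem_sw1, hx]

lemma sw1_of_mem {e : ι} {F F' : Finset ι} (h1 : e ∈ F) (h2 : e ∈ F') :
    sw1 e F F' = F := by
  ext x; by_cases hx : x = e <;> simp [mem_sw1, hx, h1, h2]

lemma card_sw1 (e : ι) (F F' : Finset ι) :
    (sw1 e F F').card = (F.erase e).card + (F' ∩ {e}).card := by
  rw [sw1, Finset.card_union_of_disjoint]
  rw [Finset.disjoint_left]
  intro x hx hx'
  exact (Finset.mem_erase.1 hx).1 (Finset.mem_singleton.1 (Finset.mem_inter.1 hx').2)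

lemma card_sw1_add (e : ι) (F F' : Finset ι) :
    (sw1 e F F').card + (sw1 e F' F).card = F.card + F'.card := by
  rw [card_sw1, card_sw1]
  have k1 : (F.erase e).card + (F ∩ {e}).card = F.card := by
    by_cases h1 : e ∈ F
    · rw [Finset.card_erase_of_mem h1, Finset.inter_singleton_of_mem h1]
      have := Finset.card_pos.2 ⟨e, h1⟩
      simp; omega
    · rw [Finset.erase_eq_of_notMem h1, Finset.inter_singleton_of_notMem h1]
      simp
  have k2 : (F'.erase e).card + (F' ∩ {e}).card = F'.card := by
    by_cases h1 : e ∈ F'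
    · rw [Finset.card_erase_of_mem h1, Finset.inter_singleton_of_mem h1]
      have := Finset.card_pos.2 ⟨e, h1⟩
      simp; omega
    · rw [Finset.erase_eq_of_notMem h1, Finset.inter_singleton_of_notMem h1]
      simp
  omega

lemma w_eq {E F : Finset ι} (α : ℝ) (hF : F ⊆ E) :
    w E α F = α ^ F.card * (1 - α) ^ (E.card - F.card) := by
  rw [w, Finset.card_sdiff_of_subset hF]

lemma w_mul_sw (e : ι) (α : ℝ) {E F F' : Finset ι} (hF : F ⊆ E) (hF' : F' ⊆ E) :
    w E α (sw1 e F F') * w E α (sw1 e F' F) = w E α F * w E α F' := by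
  have hG := sw1_subset (e := e) hF hF'
  have hG' := sw1_subset (e := e) hF' hF
  rw [w_eq α hG, w_eq α hG', w_eq α hF, w_eq α hF']
  have key : ∀ a b c d n : ℕ, a + b = c + d → a ≤ n → b ≤ n → c ≤ n → d ≤ n →
      α ^ a * (1-α) ^ (n - a) * (α ^ b * (1-α) ^ (n - b))
      = α ^ c * (1-α) ^ (n - c) * (α ^ d * (1-α) ^ (n - d)) := by
    intro a b c d n habcd ha hb hc hd
    have e1 : α ^ a * (1-α) ^ (n - a) * (α ^ b * (1-α) ^ (n - b))
        = α ^ (a + b) * (1-α) ^ ((n - a) + (n - b)) := by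
      rw [pow_add, pow_add]; ring
    have e2 : α ^ c * (1-α) ^ (n - c) * (α ^ d * (1-α) ^ (n - d))
        = α ^ (c + d) * (1-α) ^ ((n - c) + (n - d)) := by
      rw [pow_add, pow_add]; ring
    rw [e1, e2, habcd]
    congr 1
    congr 1
    omega
  exact key _ _ _ _ E.card (card_sw1_add e F F') (Finset.card_le_card hG)
    (Finset.card_le_card hG') (Finset.card_le_card hF) (Finset.card_le_card hF')

/-- Lemma A -/
lemma lemA {A B : Set (Finset ι)} {K F F' : Finset ι} {e : ι} (he : e ∉ K)
    (h : D A B K F F') :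
    D A B (insert e K) F F' ∨ D A B (insert e K) (sw1 e F F') (sw1 e F' F) := by
  obtain ⟨S, hS, T, hT, hdisj, hSF, hTH⟩ := h
  by_cases heT : e ∈ T
  · right
    have heF : e ∈ F := by
      rcases mem_hyb.1 (hTH heT) with ⟨h1, _⟩ | ⟨_, h2⟩
      · exact h1
      · exact absurd h2 he
    have heS : e ∉ S := fun hs => (Finset.disjoint_left.1 hdisj hs) heT
    refine ⟨S, hS, T, hT, hdisj, ?_, ?_⟩
    · intro x hx
      exact mem_sw1.2 (Or.inl ⟨hSF hx, fun hxe => heS (hxe ▸ hx)⟩)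
    · intro x hx
      by_cases hxe : x = e
      · subst hxe
        exact mem_hyb.2 (Or.inr ⟨mem_sw1.2 (Or.inr ⟨heF, rfl⟩), Finset.mem_insert_self _ _⟩)
      · rcases mem_hyb.1 (hTH hx) with ⟨h1, h2⟩ | ⟨h1, h2⟩
        · exact mem_hyb.2 (Or.inl ⟨mem_sw1.2 (Or.inl ⟨h1, hxe⟩),
            fun hk => (Finset.mem_insert.1 hk).elim hxe h2⟩)
        · exact mem_hyb.2 (Or.inr ⟨mem_sw1.2 (Or.inl ⟨h1, hxe⟩), Finset.mem_insert_of_mem h2⟩)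
  · left
    refine ⟨S, hS, T, hT, hdisj, hSF, ?_⟩
    intro x hx
    have hxe : x ≠ e := fun hxe => heT (hxe ▸ hx)
    rcases mem_hyb.1 (hTH hx) with ⟨h1, h2⟩ | ⟨h1, h2⟩
    · exact mem_hyb.2 (Or.inl ⟨h1, fun hk => (Finset.mem_insert.1 hk).elim hxe h2⟩)
    · exact mem_hyb.2 (Or.inr ⟨h1, Finset.mem_insert_of_mem h2⟩)

/-- Lemma C : if e ∉ F then D K F F' gives both -/
lemma lemC {A B : Set (Finset ι)} {K F F' : Finset ι} {e : ι} (he : e ∉ K) (heF : e ∉ F)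
    (h : D A B K F F') :
    D A B (insert e K) F F' ∧ D A B (insert e K) (sw1 e F F') (sw1 e F' F) := by
  obtain ⟨S, hS, T, hT, hdisj, hSF, hTH⟩ := h
  have heT : e ∉ T := by
    intro het
    rcases mem_hyb.1 (hTH het) with ⟨h1, _⟩ | ⟨_, h2⟩
    · exact heF h1
    · exact he h2
  constructor
  · refine ⟨S, hS, T, hT, hdisj, hSF, ?_⟩
    intro x hx
    have hxe : x ≠ e := fun hxe => heT (hxe ▸ hx)
    rcases mem_hyb.1 (hTH hx) with ⟨h1, h2⟩ | ⟨h1, h2⟩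
    · exact mem_hyb.2 (Or.inl ⟨h1, fun hk => (Finset.mem_insert.1 hk).elim hxe h2⟩)
    · exact mem_hyb.2 (Or.inr ⟨h1, Finset.mem_insert_of_mem h2⟩)
  · refine ⟨S, hS, T, hT, hdisj, ?_, ?_⟩
    · intro x hx
      exact mem_sw1.2 (Or.inl ⟨hSF hx, fun hxe => heF (hxe ▸ hSF hx)⟩)
    · intro x hx
      have hxe : x ≠ e := fun hxe => heT (hxe ▸ hx)
      rcases mem_hyb.1 (hTH hx) with ⟨h1, h2⟩ | ⟨h1, h2⟩
      · exact mem_hyb.2 (Or.inl ⟨mem_sw1.2 (Or.inl ⟨h1, hxe⟩),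
          fun hk => (Finset.mem_insert.1 hk).elim hxe h2⟩)
      · exact mem_hyb.2 (Or.inr ⟨mem_sw1.2 (Or.inl ⟨h1, hxe⟩), Finset.mem_insert_of_mem h2⟩)

/-- the crux: if both D K F F' and D K G G' hold, then both hold at K' -/
lemma lemBoth {A B : Set (Finset ι)} {K F F' : Finset ι} {e : ι} (he : e ∉ K)
    (h1 : D A B K F F') (h2 : D A B K (sw1 e F F') (sw1 e F' F)) :
    D A B (insert e K) F F' ∧ D A B (insert e K) (sw1 e F F') (sw1 e F' F) := by
  by_cases heF : e ∈ F
  · by_cases heF' : e ∈ F'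
    · have hG : sw1 e F F' = F := sw1_of_mem heF heF'
      have hG' : sw1 e F' F = F' := sw1_of_mem heF' heF
      rw [hG, hG']
      have hd := lemA he h1
      rw [hG, hG'] at hd
      rcases hd with h | h <;> exact ⟨h, h⟩
    · -- e ∈ F, e ∉ F' : e ∉ G where G = sw1 e F F'
      have heG : e ∉ sw1 e F F' := by
        intro hx
        rcases mem_sw1.1 hx with ⟨_, hne⟩ | ⟨hf', _⟩
        · exact hne rfl
        · exact heF' hf'
      have := lemC he heG h2
      rwa [sw1_sw1, sw1_sw1, and_comm] at this
  · have := lemC he heF h1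
    exact this

lemma two_point {A B : Set (Finset ι)} {K F F' : Finset ι} {e : ι} (he : e ∉ K) (W : ℝ)
    (hW : 0 ≤ W) :
    (if D A B K F F' then W else 0) + (if D A B K (sw1 e F F') (sw1 e F' F) then W else 0)
    ≤ (if D A B (insert e K) F F' then W else 0)
      + (if D A B (insert e K) (sw1 e F F') (sw1 e F' F) then W else 0) := by
  by_cases h1 : D A B K F F'
  · by_cases h2 : D A B K (sw1 e F F') (sw1 e F' F)
    · obtain ⟨k1, k2⟩ := lemBoth he h1 h2
      simp [h1, h2, k1, k2]
    · rcases lemA he h1 with k | k <;> simp [h1, h2, k, hW] <;>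
        split <;> simp [hW] <;> linarith
  · by_cases h2 : D A B K (sw1 e F F') (sw1 e F' F)
    · have := lemA (he := he) (F := sw1 e F F') (F' := sw1 e F' F) h2
      rw [sw1_sw1, sw1_sw1] at this
      rcases this with k | k <;> simp [h1, h2, k, hW] <;>
        split <;> simp [hW] <;> linarith
    · simp [h1, h2]
      split <;> split <;> simp [hW] <;> linarith

lemma P2_step {E : Finset ι} {α : ℝ} (h0 : 0 ≤ α) (h1 : α ≤ 1) (A B : Set (Finset ι))
    {K : Finset ι} {e : ι} (he : e ∉ K) :
    P2 E α A B K ≤ P2 E α A B (insert e K) := by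
  have hform : ∀ K' : Finset ι, P2 E α A B K'
      = ∑ q ∈ E.powerset ×ˢ E.powerset,
          (if D A B K' q.1 q.2 then w E α q.1 * w E α q.2 else 0) := by
    intro K'
    rw [P2, Finset.sum_product]
  have hreindex : ∀ K' : Finset ι,
      ∑ q ∈ E.powerset ×ˢ E.powerset,
        (if D A B K' (sw1 e q.1 q.2) (sw1 e q.2 q.1) then
          w E α (sw1 e q.1 q.2) * w E α (sw1 e q.2 q.1) else 0)
      = ∑ q ∈ E.powerset ×ˢ E.powerset,
          (if D A B K' q.1 q.2 then w E α q.1 * w E α q.2 else 0) := by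
    intro K'
    refine Finset.sum_nbij' (fun q => (sw1 e q.1 q.2, sw1 e q.2 q.1))
      (fun q => (sw1 e q.1 q.2, sw1 e q.2 q.1)) ?_ ?_ ?_ ?_ ?_
    · intro q hq
      simp only [Finset.mem_product, Finset.mem_powerset] at hq ⊢
      exact ⟨sw1_subset hq.1 hq.2, sw1_subset hq.2 hq.1⟩
    · intro q hq
      simp only [Finset.mem_product, Finset.mem_powerset] at hq ⊢
      exact ⟨sw1_subset hq.1 hq.2, sw1_subset hq.2 hq.1⟩
    · intro q _
      ext x <;> simp [sw1_sw1]
    · intro q _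
      ext x <;> simp [sw1_sw1]
    · intro q _
      rfl
  have key : (2:ℝ) * P2 E α A B K ≤ 2 * P2 E α A B (insert e K) := by
    rw [hform, hform, two_mul, two_mul]
    nth_rewrite 1 [← hreindex K]
    nth_rewrite 1 [← hreindex (insert e K)]
    rw [← Finset.sum_add_distrib, ← Finset.sum_add_distrib]
    refine Finset.sum_le_sum fun q hq => ?_
    simp only [Finset.mem_product, Finset.mem_powerset] at hq
    have hWeq : w E α (sw1 e q.1 q.2) * w E α (sw1 e q.2 q.1) = w E α q.1 * w E α q.2 :=
      w_mul_sw e α hq.1 hq.2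
    have hW : 0 ≤ w E α q.1 * w E α q.2 :=
      mul_nonneg (w_nonneg h0 h1 _ _) (w_nonneg h0 h1 _ _)
    have hp := two_point (A := A) (B := B) (K := K) (F := q.1) (F' := q.2) he
      (w E α q.1 * w E α q.2) hW
    rw [hWeq]
    linarith [hp]
  linarith

lemma P2_chain {E : Finset ι} {α : ℝ} (h0 : 0 ≤ α) (h1 : α ≤ 1) (A B : Set (Finset ι))
    (K : Finset ι) : P2 E α A B ∅ ≤ P2 E α A B K := by
  induction K using Finset.induction_on with
  | empty => exact le_refl _
  | insert _ _ he ih => exact ih.trans (P2_step h0 h1 A B he)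

lemma P2_empty (E : Finset ι) (α : ℝ) (A B : Set (Finset ι)) :
    P2 E α A B ∅ = PrP E α (dstar A B) := by
  rw [P2, PrP]
  refine Finset.sum_congr rfl fun F hF => ?_
  have hDF : ∀ F' : Finset ι, D A B ∅ F F' ↔ dstar A B F := by
    intro F'
    simp [D, dstar, hyb]
  calc ∑ F' ∈ E.powerset, (if D A B ∅ F F' then w E α F * w E α F' else 0)
      = ∑ F' ∈ E.powerset, (if dstar A B F then w E α F else 0) * w E α F' := by
        refine Finset.sum_congr rfl fun F' _ => ?_
        by_cases hd : dstar A B F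
        · simp [hd, (hDF F').2 hd]
        · rw [if_neg hd, if_neg (fun h => hd ((hDF F').1 h)), zero_mul]
    _ = (if dstar A B F then w E α F else 0) * ∑ F' ∈ E.powerset, w E α F' := by
        rw [Finset.mul_sum]
    _ = (if dstar A B F then w E α F else 0) := by rw [sum_w]; ring

lemma P2_full_le {E : Finset ι} {α : ℝ} (h0 : 0 ≤ α) (h1 : α ≤ 1) (A B : Set (Finset ι)) :
    P2 E α A B E ≤ PrP E α (occ A) * PrP E α (occ B) := by
  rw [P2, PrP, PrP, Finset.sum_mul_sum]
  refine Finset.sum_le_sum fun F hF => Finset.sum_le_sum fun F' hF' => ?_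
  simp only [Finset.mem_powerset] at hF hF'
  by_cases hD : D A B E F F'
  · obtain ⟨S, hS, T, hT, hdisj, hSF, hTH⟩ := hD
    have hTF' : T ⊆ F' := by
      intro x hx
      rcases mem_hyb.1 (hTH hx) with ⟨h1x, h2x⟩ | ⟨h1x, _⟩
      · exact absurd (hF h1x) h2x
      · exact h1x
    have hb : occ A F := ⟨S, hS, hSF⟩
    have hc : occ B F' := ⟨T, hT, hTF'⟩
    have hDtrue : D A B E F F' := ⟨S, hS, T, hT, hdisj, hSF, hTH⟩
    simp [hDtrue, hb, hc]
  · simp only [hD, if_false]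
    have := w_nonneg h0 h1 E F
    have := w_nonneg h0 h1 E F'
    by_cases hb : occ A F <;> by_cases hc : occ B F' <;>
      simp [hb, hc] <;> positivity

theorem BK_inequality {E : Finset ι} {α : ℝ} (h0 : 0 ≤ α) (h1 : α ≤ 1)
    (A B : Set (Finset ι)) :
    PrP E α (dstar A B) ≤ PrP E α (occ A) * PrP E α (occ B) := by
  have hch := P2_chain (E := E) h0 h1 A B E
  rw [P2_empty] at hch
  exact hch.trans (P2_full_le h0 h1 A B)

end BKAux


variable {V : Type*} [Fintype V] [DecidableEq V]

/-- weak fundamental inequality. Here simple paths from `i` to `j`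
through `u` are encoded as pairs consisting of the segment from `i` to `u` and
the segment from `u` to `j` (walks in the complete graph whose edges lie in `E`,
appending to a simple path). -/
theorem weak_fundamental_inequality
    (E : Finset (Sym2 V)) (α : ℝ) (hα0 : 0 ≤ α) (hα1 : α ≤ 1)
    (i j u : V) (β : ℝ) (hβ0 : 0 ≤ β) (hβ1 : β ≤ 1)
    (P : Set ((⊤ : SimpleGraph V).Walk i u × (⊤ : SimpleGraph V).Walk u j))
    (P₀ : Set ((⊤ : SimpleGraph V).Walk i j))
    (hP : ∀ p ∈ P, (p.1.append p.2).IsPath ∧ ∀ e ∈ (p.1.append p.2).edges, e ∈ E)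
    (hP₀ : ∀ p ∈ P₀, p.IsPath ∧ ∀ e ∈ p.edges, e ∈ E)
    (hdisj : ∀ p ∈ P, p.1.append p.2 ∉ P₀)
    (hunion : β ≤ prPaths E α
      ((fun p => (p.1.append p.2).edges) '' P ∪ SimpleGraph.Walk.edges '' P₀))
    (hP₀small : prPaths E α (SimpleGraph.Walk.edges '' P₀) ≤ β / 2) :
    β / 2 ≤ prPaths E α ((fun p => p.1.edges) '' P) *
              prPaths E α ((fun p => p.2.edges) '' P) := by
    classical
  have hpr : ∀ Q : Set (List (Sym2 V)), prPaths E α Q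
      = BKAux.PrP E α (fun F => ∃ p ∈ Q, ∀ e ∈ p, e ∈ F) := fun Q => rfl
  set A : Set (Finset (Sym2 V)) := (fun p : (⊤ : SimpleGraph V).Walk i u × (⊤ : SimpleGraph V).Walk u j => p.1.edges.toFinset) '' P with hA
  set B : Set (Finset (Sym2 V)) := (fun p : (⊤ : SimpleGraph V).Walk i u × (⊤ : SimpleGraph V).Walk u j => p.2.edges.toFinset) '' P with hB
  have h1 : prPaths E α ((fun p => (p.1.append p.2).edges) '' P ∪ SimpleGraph.Walk.edges '' P₀)
      ≤ prPaths E α ((fun p => (p.1.append p.2).edges) '' P)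
        + prPaths E α (SimpleGraph.Walk.edges '' P₀) := by
    rw [hpr, hpr, hpr]
    refine le_trans (le_of_eq (BKAux.PrP_congr E ?_)) (BKAux.PrP_union_le hα0 hα1 E _ _)
    intro F _
    constructor
    · rintro ⟨l, hl | hl, hsub⟩
      · exact Or.inl ⟨l, hl, hsub⟩
      · exact Or.inr ⟨l, hl, hsub⟩
    · rintro (⟨l, hl, hsub⟩ | ⟨l, hl, hsub⟩)
      · exact ⟨l, Or.inl hl, hsub⟩
      · exact ⟨l, Or.inr hl, hsub⟩
  have hfull : β / 2 ≤ prPaths E α ((fun p => (p.1.append p.2).edges) '' P) := by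
    linarith
  have h2 : prPaths E α ((fun p => (p.1.append p.2).edges) '' P)
      ≤ BKAux.PrP E α (BKAux.dstar A B) := by
    rw [hpr]
    refine BKAux.PrP_mono hα0 hα1 E ?_
    rintro F hF ⟨l, ⟨p, hp, rfl⟩, hsub⟩
    refine ⟨p.1.edges.toFinset, ⟨p, hp, rfl⟩, p.2.edges.toFinset, ⟨p, hp, rfl⟩, ?_, ?_, ?_⟩
    · rw [List.disjoint_toFinset_iff_disjoint]
      have hnd := (hP p hp).1.isTrail.edges_nodup
      rw [SimpleGraph.Walk.edges_append] at hnd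
      intro a ha hb; exact (List.nodup_append.1 hnd).2.2 a ha a hb rfl
    · intro x hx
      refine hsub x ?_
      show x ∈ (p.1.append p.2).edges
      rw [SimpleGraph.Walk.edges_append]
      exact List.mem_append_left _ (List.mem_toFinset.1 hx)
    · intro x hx
      refine hsub x ?_
      show x ∈ (p.1.append p.2).edges
      rw [SimpleGraph.Walk.edges_append]
      exact List.mem_append_right _ (List.mem_toFinset.1 hx)
  have h3 := BKAux.BK_inequality (E := E) hα0 hα1 A B
  have h4 : BKAux.PrP E α (BKAux.occ A) = prPaths E α ((fun p => p.1.edges) '' P) := by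
    rw [hpr]
    refine BKAux.PrP_congr E ?_
    intro F _
    constructor
    · rintro ⟨S, ⟨p, hp, rfl⟩, hSF⟩
      exact ⟨p.1.edges, ⟨p, hp, rfl⟩, fun e he => hSF (List.mem_toFinset.2 he)⟩
    · rintro ⟨l, ⟨p, hp, rfl⟩, h⟩
      exact ⟨p.1.edges.toFinset, ⟨p, hp, rfl⟩, fun e he => h e (List.mem_toFinset.1 he)⟩
  have h5 : BKAux.PrP E α (BKAux.occ B) = prPaths E α ((fun p => p.2.edges) '' P) := by
    rw [hpr]
    refine BKAux.PrP_congr E ?_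
    intro F _
    constructor
    · rintro ⟨S, ⟨p, hp, rfl⟩, hSF⟩
      exact ⟨p.2.edges, ⟨p, hp, rfl⟩, fun e he => hSF (List.mem_toFinset.2 he)⟩
    · rintro ⟨l, ⟨p, hp, rfl⟩, h⟩
      exact ⟨p.2.edges.toFinset, ⟨p, hp, rfl⟩, fun e he => h e (List.mem_toFinset.1 he)⟩
  calc β / 2 ≤ prPaths E α ((fun p => (p.1.append p.2).edges) '' P) := hfull
    _ ≤ BKAux.PrP E α (BKAux.dstar A B) := h2
    _ ≤ BKAux.PrP E α (BKAux.occ A) * BKAux.PrP E α (BKAux.occ B) := h3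
    _ = _ := by rw [h4, h5]
end

section
/- Close-center lemma: Let (G = (V, E, α), k) be an instance of Broadcast Improvement with optimum broadcast β*. Then there exists a set X̂ ⊆ V of at most k + 1 vertices such that for every vertex w ∈ V, at least one vertex s ∈ X̂ satisfies prox_G(w, s) ≥ β*/2^{k+1} (equivalently, in the implied metric φ(u, v) = −log prox_G(u, v), every vertex is within distance −log β* + k + 1 of some vertex of X̂). -/
open scoped Classical

variable {V : Type*} [Fintype V] [DecidableEq V]

section CCproof
set_option linter.unusedSectionVars false
set_option linter.unusedVariables false
set_option maxHeartbeats 1000000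

open scoped Classical

variable {V : Type*} [Fintype V] [DecidableEq V]

namespace CCaux

/-- Reachability in the sampled graph. -/
def Rch (F : Finset (Sym2 V)) (u v : V) : Prop :=
  (SimpleGraph.fromEdgeSet (F : Set (Sym2 V))).Reachable u v

/-- Weight of a sample `F` with ground set `E`. -/
noncomputable def wt (E : Finset (Sym2 V)) (α : ℝ) (F : Finset (Sym2 V)) : ℝ :=
  α ^ F.card * (1 - α) ^ ((E \ F).card)

/-- Probability of an event over samples of ground set `E`. -/
noncomputable def Pr (E : Finset (Sym2 V)) (α : ℝ) (S : Finset (Sym2 V) → Prop) : ℝ :=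
  ∑ F ∈ E.powerset, if S F then wt E α F else 0

variable {E : Finset (Sym2 V)} {α : ℝ}

lemma wt_nonneg (hα0 : 0 ≤ α) (hα1 : α ≤ 1) (E F : Finset (Sym2 V)) :
    0 ≤ wt E α F :=
  mul_nonneg (pow_nonneg hα0 _) (pow_nonneg (by linarith) _)

lemma Pr_nonneg (hα0 : 0 ≤ α) (hα1 : α ≤ 1) (S : Finset (Sym2 V) → Prop) :
    0 ≤ Pr E α S := by
  refine Finset.sum_nonneg fun F _ => ?_
  split
  · exact wt_nonneg hα0 hα1 E F
  · exact le_refl 0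

lemma Pr_mono_event (hα0 : 0 ≤ α) (hα1 : α ≤ 1) {S T : Finset (Sym2 V) → Prop}
    (h : ∀ F, F ⊆ E → S F → T F) : Pr E α S ≤ Pr E α T := by
  refine Finset.sum_le_sum fun F hF => ?_
  rw [Finset.mem_powerset] at hF
  by_cases hS : S F
  · rw [if_pos hS, if_pos (h F hF hS)]
  · rw [if_neg hS]
    split
    · exact wt_nonneg hα0 hα1 E F
    · exact le_refl 0

lemma Pr_eq_sum_filter (S : Finset (Sym2 V) → Prop) [DecidablePred S] :
    Pr E α S = ∑ F ∈ E.powerset.filter S, wt E α F := by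
  rw [Finset.sum_filter]
  unfold Pr
  refine Finset.sum_congr rfl fun F _ => ?_
  by_cases h : S F <;> simp [h]

lemma Pr_congr {S T : Finset (Sym2 V) → Prop} (h : ∀ F, F ⊆ E → (S F ↔ T F)) :
    Pr E α S = Pr E α T := by
  refine Finset.sum_congr rfl fun F hF => ?_
  rw [Finset.mem_powerset] at hF
  rw [h F hF]

lemma Pr_union_le (hα0 : 0 ≤ α) (hα1 : α ≤ 1) (S T : Finset (Sym2 V) → Prop) :
    Pr E α (fun F => S F ∨ T F) ≤ Pr E α S + Pr E α T := by
  unfold Pr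
  rw [← Finset.sum_add_distrib]
  refine Finset.sum_le_sum fun F _ => ?_
  by_cases hS : S F <;> by_cases hT : T F <;>
    simp [hS, hT, wt_nonneg hα0 hα1 E F]

/-- splitting an event according to another event -/
lemma Pr_split (S T : Finset (Sym2 V) → Prop) :
    Pr E α S = Pr E α (fun F => S F ∧ T F) + Pr E α (fun F => S F ∧ ¬ T F) := by
  unfold Pr
  rw [← Finset.sum_add_distrib]
  refine Finset.sum_congr rfl fun F _ => ?_
  by_cases hS : S F <;> by_cases hT : T F <;> simp [hS, hT]

lemma wt_insert_not_mem {e : Sym2 V} (he : e ∉ E) {F : Finset (Sym2 V)} (hF : F ⊆ E) :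
    wt (insert e E) α F = (1 - α) * wt E α F := by
  unfold wt
  have h1 : insert e E \ F = insert e (E \ F) := by
    ext x
    simp only [Finset.mem_sdiff, Finset.mem_insert]
    constructor
    · rintro ⟨hx | hx, hxF⟩
      · exact Or.inl hx
      · exact Or.inr ⟨hx, hxF⟩
    · rintro (rfl | ⟨hx, hxF⟩)
      · exact ⟨Or.inl rfl, fun hc => he (hF hc)⟩
      · exact ⟨Or.inr hx, hxF⟩
  have h2 : e ∉ E \ F := fun hc => he (Finset.mem_sdiff.1 hc).1
  rw [h1, Finset.card_insert_of_notMem h2, pow_succ]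
  ring

lemma wt_insert_mem {e : Sym2 V} (he : e ∉ E) {F : Finset (Sym2 V)} (hF : F ⊆ E) :
    wt (insert e E) α (insert e F) = α * wt E α F := by
  unfold wt
  have heF : e ∉ F := fun hc => he (hF hc)
  have h1 : insert e E \ insert e F = E \ F := by
    ext x
    simp only [Finset.mem_sdiff, Finset.mem_insert, not_or]
    constructor
    · rintro ⟨hx | hx, hne, hxF⟩
      · exact absurd hx hne
      · exact ⟨hx, hxF⟩
    · rintro ⟨hx, hxF⟩
      exact ⟨Or.inr hx, fun hc => he (hc ▸ hx), hxF⟩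
  rw [h1, Finset.card_insert_of_notMem heF, pow_succ]
  ring

/-- The key splitting lemma: conditioning on the presence of a fresh edge `e`. -/
lemma Pr_insert {e : Sym2 V} (he : e ∉ E) (S : Finset (Sym2 V) → Prop) :
    Pr (insert e E) α S
      = (1 - α) * Pr E α S + α * Pr E α (fun F => S (insert e F)) := by
  unfold Pr
  rw [Finset.powerset_insert, Finset.sum_union]
  · have h1 : ∑ F ∈ E.powerset, (if S F then wt (insert e E) α F else 0)
        = (1 - α) * ∑ F ∈ E.powerset, (if S F then wt E α F else 0) := by
      rw [Finset.mul_sum]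
      refine Finset.sum_congr rfl fun F hF => ?_
      rw [Finset.mem_powerset] at hF
      split
      · exact wt_insert_not_mem he hF
      · ring
    have h2 : ∑ F ∈ Finset.image (insert e) E.powerset,
          (if S F then wt (insert e E) α F else 0)
        = α * ∑ F ∈ E.powerset, (if S (insert e F) then wt E α F else 0) := by
      rw [Finset.sum_image, Finset.mul_sum]
      · refine Finset.sum_congr rfl fun F hF => ?_
        rw [Finset.mem_powerset] at hF
        split
        · exact wt_insert_mem he hF
        · ring
      · intro x hx y hy hxy
        rw [Finset.mem_coe, Finset.mem_powerset] at hx hy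
        have hex : e ∉ x := fun hc => he (hx hc)
        have hey : e ∉ y := fun hc => he (hy hc)
        have := congrArg (Finset.erase · e) hxy
        simpa [Finset.erase_insert hex, Finset.erase_insert hey] using this
    rw [h1, h2]
  · rw [Finset.disjoint_left]
    intro F hF hF'
    rw [Finset.mem_powerset] at hF
    obtain ⟨G, hG, rfl⟩ := Finset.mem_image.1 hF'
    exact he (hF (Finset.mem_insert_self e G))

lemma Pr_true_eq_one (hα0 : 0 ≤ α) (hα1 : α ≤ 1) :
    Pr E α (fun _ => True) = 1 := by
  induction E using Finset.induction_on with
  | empty =>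
      unfold Pr wt
      simp
  | insert _ _ he ih =>
      rw [Pr_insert he]
      simp only [ih]
      ring

lemma Pr_le_one (hα0 : 0 ≤ α) (hα1 : α ≤ 1) (S : Finset (Sym2 V) → Prop) :
    Pr E α S ≤ 1 := by
  have := Pr_mono_event (E := E) hα0 hα1 (S := S) (T := fun _ => True) (fun _ _ _ => trivial)
  rw [Pr_true_eq_one hα0 hα1] at this
  exact this

/-- Monotone events have larger probability on larger ground sets. -/
lemma Pr_mono_ground (hα0 : 0 ≤ α) (hα1 : α ≤ 1) {E' : Finset (Sym2 V)}
    (hE' : E' ⊆ E) {S : Finset (Sym2 V) → Prop}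
    (hS : ∀ F F', F ⊆ F' → S F → S F') :
    Pr E' α S ≤ Pr E α S := by
  have key : ∀ (D : Finset (Sym2 V)), Disjoint E' D → Pr E' α S ≤ Pr (E' ∪ D) α S := by
    intro D
    induction D using Finset.induction_on with
    | empty => intro _; rw [Finset.union_empty]
    | @insert f D hf ih =>
        intro hdisj
        have hfE' : f ∉ E' := by
          intro hc
          exact (Finset.disjoint_left.1 hdisj hc) (Finset.mem_insert_self f D)
        have hdisj' : Disjoint E' D := by
          refine Finset.disjoint_left.2 fun x hx hxD => ?_
          exact (Finset.disjoint_left.1 hdisj hx) (Finset.mem_insert_of_mem hxD)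
        have hfnotin : f ∉ E' ∪ D := by
          simp only [Finset.mem_union, not_or]
          exact ⟨hfE', hf⟩
        have heq : E' ∪ insert f D = insert f (E' ∪ D) := Finset.union_insert f E' D
        rw [heq, Pr_insert hfnotin]
        have h1 : Pr (E' ∪ D) α S ≤ Pr (E' ∪ D) α (fun F => S (insert f F)) :=
          Pr_mono_event hα0 hα1 (fun F _ hSF => hS F (insert f F) (Finset.subset_insert f F) hSF)
        have h2 := ih hdisj'
        nlinarith [Pr_nonneg (E := E' ∪ D) hα0 hα1 S]
  have := key (E \ E') (Finset.disjoint_sdiff)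
  rwa [Finset.union_sdiff_of_subset hE'] at this

/-- Harris inequality for monotone events. -/
lemma Pr_harris (hα0 : 0 ≤ α) (hα1 : α ≤ 1) {S T : Finset (Sym2 V) → Prop}
    (hS : ∀ F F', F ⊆ F' → S F → S F') (hT : ∀ F F', F ⊆ F' → T F → T F') :
    Pr E α S * Pr E α T ≤ Pr E α (fun F => S F ∧ T F) := by
  induction E using Finset.induction_on generalizing S T with
  | empty =>
      unfold Pr wt
      by_cases hS0 : S ∅ <;> by_cases hT0 : T ∅ <;> simp [hS0, hT0]
  | @insert f E hf ih =>
      rw [Pr_insert hf, Pr_insert hf, Pr_insert hf]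
      have hSins : ∀ F F', F ⊆ F' → S (insert f F) → S (insert f F') := by
        intro F F' hsub h
        exact hS _ _ (Finset.insert_subset_insert f hsub) h
      have hTins : ∀ F F', F ⊆ F' → T (insert f F) → T (insert f F') := by
        intro F F' hsub h
        exact hT _ _ (Finset.insert_subset_insert f hsub) h
      have hJ0 : Pr E α S * Pr E α T ≤ Pr E α (fun F => S F ∧ T F) := ih hS hT
      have hJ1 : Pr E α (fun F => S (insert f F)) * Pr E α (fun F => T (insert f F))
          ≤ Pr E α (fun F => S (insert f F) ∧ T (insert f F)) := ih hSins hTins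
      have hs01 : Pr E α S ≤ Pr E α (fun F => S (insert f F)) :=
        Pr_mono_event hα0 hα1 (fun F _ h => hS F (insert f F) (Finset.subset_insert f F) h)
      have ht01 : Pr E α T ≤ Pr E α (fun F => T (insert f F)) :=
        Pr_mono_event hα0 hα1 (fun F _ h => hT F (insert f F) (Finset.subset_insert f F) h)
      have hs0 : 0 ≤ Pr E α S := Pr_nonneg hα0 hα1 S
      have ht0 : 0 ≤ Pr E α T := Pr_nonneg hα0 hα1 T
      nlinarith [mul_nonneg (mul_nonneg hα0 (by linarith : (0:ℝ) ≤ 1 - α))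
        (mul_nonneg (sub_nonneg.2 hs01) (sub_nonneg.2 ht01))]

end CCaux
namespace CCaux

variable {E : Finset (Sym2 V)} {α : ℝ}

lemma Rch_refl (F : Finset (Sym2 V)) (u : V) : Rch F u u := SimpleGraph.Reachable.refl u

lemma Rch_symm {F : Finset (Sym2 V)} {u v : V} (h : Rch F u v) : Rch F v u := h.symm

lemma Rch_trans {F : Finset (Sym2 V)} {u v w : V} (h : Rch F u v) (h' : Rch F v w) :
    Rch F u w := h.trans h'

lemma Rch_mono {F F' : Finset (Sym2 V)} (hFF : F ⊆ F') {u v : V} (h : Rch F u v) :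
    Rch F' u v :=
  h.mono (SimpleGraph.fromEdgeSet_mono (by exact_mod_cast hFF))

/-- Decomposing reachability after inserting one edge. -/
lemma Rch_insert_cases {a b : V} {F : Finset (Sym2 V)} {u v : V}
    (h : Rch (insert (s(a,b)) F) u v) :
    Rch F u v ∨ (Rch F u a ∧ Rch F b v) ∨ (Rch F u b ∧ Rch F a v) := by
  obtain ⟨p⟩ := h
  induction p with
  | nil => exact Or.inl (Rch_refl F _)
  | @cons u x v hadj p ih =>
      rw [SimpleGraph.fromEdgeSet_adj] at hadj
      obtain ⟨hmem, hne⟩ := hadj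
      rw [Finset.coe_insert, Set.mem_insert_iff] at hmem
      rcases hmem with heq | hmemF
      · -- the step uses the new edge
        rw [Sym2.eq_iff] at heq
        rcases heq with ⟨hu, hx⟩ | ⟨hu, hx⟩
        · -- u = a, x = b
          rw [hu]; rw [hx] at ih
          rcases ih with h1 | ⟨h2, h3⟩ | ⟨h2, h3⟩
          · exact Or.inr (Or.inl ⟨Rch_refl F _, h1⟩)
          · exact Or.inl (Rch_trans (Rch_symm h2) h3)
          · exact Or.inl h3
        · -- u = b, x = a
          rw [hu]; rw [hx] at ih
          rcases ih with h1 | ⟨h2, h3⟩ | ⟨h2, h3⟩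
          · exact Or.inr (Or.inr ⟨Rch_refl F _, h1⟩)
          · exact Or.inl h3
          · exact Or.inl (Rch_trans (Rch_symm h2) h3)
      · -- the step uses an old edge
        have hadjF : Rch F u x :=
          (SimpleGraph.fromEdgeSet_adj (F : Set (Sym2 V)) |>.2 ⟨hmemF, hne⟩).reachable
        rcases ih with h1 | ⟨h2, h3⟩ | ⟨h2, h3⟩
        · exact Or.inl (Rch_trans hadjF h1)
        · exact Or.inr (Or.inl ⟨Rch_trans hadjF h2, h3⟩)
        · exact Or.inr (Or.inr ⟨Rch_trans hadjF h2, h3⟩)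

lemma prox_eq_Pr (E : Finset (Sym2 V)) (α : ℝ) (u v : V) :
    prox E α u v = Pr E α (fun F => Rch F u v) := by
  unfold prox Pr wt Rch
  refine Finset.sum_congr rfl fun F _ => ?_
  by_cases h : (SimpleGraph.fromEdgeSet (F : Set (Sym2 V))).Reachable u v <;> simp [h]

lemma prox_nonneg (hα0 : 0 ≤ α) (hα1 : α ≤ 1) (u v : V) : 0 ≤ prox E α u v := by
  rw [prox_eq_Pr]; exact Pr_nonneg hα0 hα1 _

lemma prox_le_one (hα0 : 0 ≤ α) (hα1 : α ≤ 1) (u v : V) : prox E α u v ≤ 1 := by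
  rw [prox_eq_Pr]; exact Pr_le_one hα0 hα1 _

lemma prox_self (hα0 : 0 ≤ α) (hα1 : α ≤ 1) (u : V) : prox E α u u = 1 := by
  rw [prox_eq_Pr]
  rw [Pr_congr (T := fun _ => True) (fun F _ => by simp [Rch_refl F u])]
  exact Pr_true_eq_one hα0 hα1

lemma prox_comm (u v : V) : prox E α u v = prox E α v u := by
  rw [prox_eq_Pr, prox_eq_Pr]
  exact Pr_congr (fun F _ => ⟨Rch_symm, Rch_symm⟩)

/-- Harris chaining through an intermediate vertex. -/
lemma prox_mul_le (hα0 : 0 ≤ α) (hα1 : α ≤ 1) (u z v : V) :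
    prox E α u z * prox E α z v ≤ prox E α u v := by
  rw [prox_eq_Pr, prox_eq_Pr, prox_eq_Pr]
  calc Pr E α (fun F => Rch F u z) * Pr E α (fun F => Rch F z v)
      ≤ Pr E α (fun F => Rch F u z ∧ Rch F z v) :=
        Pr_harris hα0 hα1 (fun F F' h => Rch_mono h) (fun F F' h => Rch_mono h)
    _ ≤ Pr E α (fun F => Rch F u v) :=
        Pr_mono_event hα0 hα1 (fun F _ ⟨h1, h2⟩ => Rch_trans h1 h2)

end CCaux
namespace CCaux

variable {E : Finset (Sym2 V)} {α : ℝ}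

lemma sym2_cases (f : Sym2 V) : ∃ p q : V, f = s(p, q) :=
  f.inductionOn fun p q => ⟨p, q, rfl⟩

/-- Edges inside `C`. -/
noncomputable def eIn (E : Finset (Sym2 V)) (C : Finset V) : Finset (Sym2 V) :=
  E.filter (fun f => ∀ x ∈ f, x ∈ C)

/-- Edges outside `C`. -/
noncomputable def eOut (E : Finset (Sym2 V)) (C : Finset V) : Finset (Sym2 V) :=
  E.filter (fun f => ∀ x ∈ f, x ∉ C)

/-- Boundary edges of `C`. -/
noncomputable def eBd (E : Finset (Sym2 V)) (C : Finset V) : Finset (Sym2 V) :=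
  (E \ eIn E C) \ eOut E C

/-- The connected component of `s` in the sampled graph, as a finset. -/
noncomputable def cmpt (F : Finset (Sym2 V)) (s : V) : Finset V :=
  Finset.univ.filter (fun c => Rch F s c)

lemma mem_cmpt {F : Finset (Sym2 V)} {s c : V} : c ∈ cmpt F s ↔ Rch F s c := by
  simp [cmpt]

lemma self_mem_cmpt (F : Finset (Sym2 V)) (s : V) : s ∈ cmpt F s :=
  mem_cmpt.2 (Rch_refl F s)

lemma eIn_subset (C : Finset V) : eIn E C ⊆ E := Finset.filter_subset _ _
lemma eOut_subset (C : Finset V) : eOut E C ⊆ E := Finset.filter_subset _ _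

lemma disjoint_eIn_eOut (C : Finset V) : Disjoint (eIn E C) (eOut E C) := by
  rw [Finset.disjoint_left]
  intro f hf hg
  obtain ⟨p, q, rfl⟩ := sym2_cases f
  rw [eIn, Finset.mem_filter] at hf
  rw [eOut, Finset.mem_filter] at hg
  have hp : p ∈ s(p, q) := Sym2.mem_iff.2 (Or.inl rfl)
  exact hg.2 p hp (hf.2 p hp)

/-- Every sampled edge is inside or outside the component of `s`. -/
lemma mem_eIn_or_eOut {F : Finset (Sym2 V)} (hF : F ⊆ E) {s : V} {C : Finset V}
    (hC : cmpt F s = C) {f : Sym2 V} (hf : f ∈ F) :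
    f ∈ eIn E C ∨ f ∈ eOut E C := by
  obtain ⟨p, q, rfl⟩ := sym2_cases f
  have hmemEq : ∀ x, x ∈ (s(p, q) : Sym2 V) ↔ (x = p ∨ x = q) := fun x => Sym2.mem_iff
  by_cases hp : p ∈ C <;> by_cases hq : q ∈ C
  · refine Or.inl (Finset.mem_filter.2 ⟨hF hf, fun x hx => ?_⟩)
    rcases (hmemEq x).1 hx with rfl | rfl <;> assumption
  · -- p ∈ C, q ∉ C : contradiction
    exfalso
    have hpq : p ≠ q := fun h => hq (h ▸ hp)
    have hadj : (SimpleGraph.fromEdgeSet (F : Set (Sym2 V))).Adj p q :=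
      (SimpleGraph.fromEdgeSet_adj _).2 ⟨by exact_mod_cast hf, hpq⟩
    have hsp : Rch F s p := mem_cmpt.1 (hC ▸ hp)
    have hsq : Rch F s q := Rch_trans hsp hadj.reachable
    exact hq (hC ▸ mem_cmpt.2 hsq)
  · -- q ∈ C, p ∉ C
    exfalso
    have hpq : q ≠ p := fun h => hp (h ▸ hq)
    have hadj : (SimpleGraph.fromEdgeSet (F : Set (Sym2 V))).Adj q p := by
      refine (SimpleGraph.fromEdgeSet_adj _).2 ⟨?_, hpq⟩
      rw [Sym2.eq_swap]
      exact_mod_cast hf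
    have hsq : Rch F s q := mem_cmpt.1 (hC ▸ hq)
    have hsp : Rch F s p := Rch_trans hsq hadj.reachable
    exact hp (hC ▸ mem_cmpt.2 hsp)
  · refine Or.inr (Finset.mem_filter.2 ⟨hF hf, fun x hx => ?_⟩)
    rcases (hmemEq x).1 hx with rfl | rfl <;> assumption

/-- Walks starting inside the component stay inside, using only interior edges. -/
lemma rch_inter_eIn {F : Finset (Sym2 V)} (hF : F ⊆ E) {s : V} {C : Finset V}
    (hC : cmpt F s = C) {u c : V} (hu : u ∈ C) (h : Rch F u c) :
    Rch (F ∩ eIn E C) u c := by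
  obtain ⟨p⟩ := h
  revert hu
  induction p with
  | nil => intro _; exact Rch_refl _ _
  | @cons u x c hadj p ih =>
      intro hu
      rw [SimpleGraph.fromEdgeSet_adj] at hadj
      obtain ⟨hmem, hne⟩ := hadj
      have hmemF : s(u, x) ∈ F := by exact_mod_cast hmem
      have hsu : Rch F s u := mem_cmpt.1 (hC ▸ hu)
      have hadjF : (SimpleGraph.fromEdgeSet (F : Set (Sym2 V))).Adj u x :=
        (SimpleGraph.fromEdgeSet_adj _).2 ⟨hmem, hne⟩
      have hx : x ∈ C := hC ▸ mem_cmpt.2 (Rch_trans hsu hadjF.reachable)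
      have hedge : s(u, x) ∈ F ∩ eIn E C := by
        refine Finset.mem_inter.2 ⟨hmemF, Finset.mem_filter.2 ⟨hF hmemF, fun z hz => ?_⟩⟩
        rcases Sym2.mem_iff.1 hz with rfl | rfl <;> assumption
      have hadj' : (SimpleGraph.fromEdgeSet ((F ∩ eIn E C : Finset (Sym2 V)) : Set (Sym2 V))).Adj u x :=
        (SimpleGraph.fromEdgeSet_adj _).2 ⟨by exact_mod_cast hedge, hne⟩
      exact Rch_trans hadj'.reachable (ih hx)

/-- Walks starting outside the component stay outside, using only exterior edges. -/
lemma rch_inter_eOut {F : Finset (Sym2 V)} (hF : F ⊆ E) {s : V} {C : Finset V}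
    (hC : cmpt F s = C) {u c : V} (hu : u ∉ C) (h : Rch F u c) :
    Rch (F ∩ eOut E C) u c := by
  obtain ⟨p⟩ := h
  revert hu
  induction p with
  | nil => intro _; exact Rch_refl _ _
  | @cons u x c hadj p ih =>
      intro hu
      rw [SimpleGraph.fromEdgeSet_adj] at hadj
      obtain ⟨hmem, hne⟩ := hadj
      have hmemF : s(u, x) ∈ F := by exact_mod_cast hmem
      have hadjF : (SimpleGraph.fromEdgeSet (F : Set (Sym2 V))).Adj u x :=
        (SimpleGraph.fromEdgeSet_adj _).2 ⟨hmem, hne⟩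
      have hx : x ∉ C := by
        intro hxC
        have hsx : Rch F s x := mem_cmpt.1 (hC ▸ hxC)
        exact hu (hC ▸ mem_cmpt.2 (Rch_trans hsx (Rch_symm hadjF.reachable)))
      have hedge : s(u, x) ∈ F ∩ eOut E C := by
        refine Finset.mem_inter.2 ⟨hmemF, Finset.mem_filter.2 ⟨hF hmemF, fun z hz => ?_⟩⟩
        rcases Sym2.mem_iff.1 hz with rfl | rfl <;> assumption
      have hadj' : (SimpleGraph.fromEdgeSet ((F ∩ eOut E C : Finset (Sym2 V)) : Set (Sym2 V))).Adj u x :=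
        (SimpleGraph.fromEdgeSet_adj _).2 ⟨by exact_mod_cast hedge, hne⟩
      exact Rch_trans hadj'.reachable (ih hx)

/-- Reconstructing the component from the two halves. -/
lemma cmpt_union {F₁ F₂ : Finset (Sym2 V)} {s : V} {C : Finset V}
    (h1 : F₁ ⊆ eIn E C) (h2 : F₂ ⊆ eOut E C) (hΦ : cmpt F₁ s = C) :
    cmpt (F₁ ∪ F₂) s = C := by
  have hsC : s ∈ C := hΦ ▸ self_mem_cmpt F₁ s
  have key : ∀ (u c : V), Rch (F₁ ∪ F₂) u c → u ∈ C → c ∈ C := by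
    intro u c h
    obtain ⟨p⟩ := h
    induction p with
    | nil => exact id
    | @cons u x c hadj p ih =>
        intro hu
        rw [SimpleGraph.fromEdgeSet_adj] at hadj
        obtain ⟨hmem, hne⟩ := hadj
        have hmemF : s(u, x) ∈ F₁ ∪ F₂ := by exact_mod_cast hmem
        have hx : x ∈ C := by
          rcases Finset.mem_union.1 hmemF with hh | hh
          · have := (Finset.mem_filter.1 (h1 hh)).2
            exact this x (Sym2.mem_iff.2 (Or.inr rfl))
          · exfalso
            have := (Finset.mem_filter.1 (h2 hh)).2
            exact this u (Sym2.mem_iff.2 (Or.inl rfl)) hu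
        exact ih hx
  ext c
  rw [mem_cmpt]
  constructor
  · intro h; exact key s c h hsC
  · intro hcC
    exact Rch_mono Finset.subset_union_left (mem_cmpt.1 (hΦ ▸ hcC))

/-- The ground set is partitioned into interior, exterior and boundary edges. -/
lemma ground_partition (C : Finset V) {x : Sym2 V} (hx : x ∈ E) :
    x ∈ eIn E C ∨ x ∈ eOut E C ∨ x ∈ eBd E C := by
  by_cases h1 : x ∈ eIn E C
  · exact Or.inl h1
  by_cases h2 : x ∈ eOut E C
  · exact Or.inr (Or.inl h2)
  · exact Or.inr (Or.inr (Finset.mem_sdiff.2 ⟨Finset.mem_sdiff.2 ⟨hx, h1⟩, h2⟩))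

lemma eBd_disj_eIn (C : Finset V) : Disjoint (eBd E C) (eIn E C) := by
  rw [Finset.disjoint_left]
  intro f hf hg
  exact (Finset.mem_sdiff.1 (Finset.mem_sdiff.1 hf).1).2 hg

lemma eBd_disj_eOut (C : Finset V) : Disjoint (eBd E C) (eOut E C) := by
  rw [Finset.disjoint_left]
  intro f hf hg
  exact (Finset.mem_sdiff.1 hf).2 hg

/-- Weight factorization for split samples. -/
lemma wt_factor (C : Finset V) {F₁ F₂ : Finset (Sym2 V)}
    (h1 : F₁ ⊆ eIn E C) (h2 : F₂ ⊆ eOut E C) :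
    wt E α (F₁ ∪ F₂)
      = wt (eIn E C) α F₁ * wt (eOut E C) α F₂ * (1 - α) ^ ((eBd E C).card) := by
  have hdisj : Disjoint F₁ F₂ :=
    Finset.disjoint_of_subset_left h1 (Finset.disjoint_of_subset_right h2 (disjoint_eIn_eOut C))
  have hcard1 : (F₁ ∪ F₂).card = F₁.card + F₂.card := Finset.card_union_of_disjoint hdisj
  have hsdiff : E \ (F₁ ∪ F₂) = ((eIn E C \ F₁) ∪ (eOut E C \ F₂)) ∪ eBd E C := by
    ext x
    simp only [Finset.mem_sdiff, Finset.mem_union]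
    constructor
    · rintro ⟨hxE, hxF⟩
      rcases ground_partition C hxE with h | h | h
      · exact Or.inl (Or.inl ⟨h, fun hc => hxF (Or.inl hc)⟩)
      · exact Or.inl (Or.inr ⟨h, fun hc => hxF (Or.inr hc)⟩)
      · exact Or.inr h
    · rintro (⟨⟨hxIn, hxF1⟩ | ⟨hxOut, hxF2⟩⟩ | hxBd)
      · refine ⟨eIn_subset C hxIn, fun hc => ?_⟩
        rcases hc with hc | hc
        · exact hxF1 hc
        · exact (Finset.disjoint_left.1 (disjoint_eIn_eOut C)) hxIn (h2 hc)
      · refine ⟨eOut_subset C hxOut, fun hc => ?_⟩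
        rcases hc with hc | hc
        · exact (Finset.disjoint_left.1 (disjoint_eIn_eOut C)) (h1 hc) hxOut
        · exact hxF2 hc
      · refine ⟨(Finset.mem_sdiff.1 (Finset.mem_sdiff.1 hxBd).1).1, fun hc => ?_⟩
        rcases hc with hc | hc
        · exact (Finset.disjoint_left.1 (eBd_disj_eIn C)) hxBd (h1 hc)
        · exact (Finset.disjoint_left.1 (eBd_disj_eOut C)) hxBd (h2 hc)
  have hd1 : Disjoint (eIn E C \ F₁) (eOut E C \ F₂) :=
    Finset.disjoint_of_subset_left (Finset.sdiff_subset)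
      (Finset.disjoint_of_subset_right (Finset.sdiff_subset) (disjoint_eIn_eOut C))
  have hd2 : Disjoint ((eIn E C \ F₁) ∪ (eOut E C \ F₂)) (eBd E C) := by
    rw [Finset.disjoint_union_left]
    constructor
    · exact Finset.disjoint_of_subset_left (Finset.sdiff_subset) (eBd_disj_eIn C).symm
    · exact Finset.disjoint_of_subset_left (Finset.sdiff_subset) (eBd_disj_eOut C).symm
  have hcard2 : (E \ (F₁ ∪ F₂)).card
      = (eIn E C \ F₁).card + (eOut E C \ F₂).card + (eBd E C).card := by
    rw [hsdiff, Finset.card_union_of_disjoint hd2, Finset.card_union_of_disjoint hd1]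
  unfold wt
  rw [hcard1, hcard2, pow_add, pow_add, pow_add]
  ring

end CCaux
namespace CCaux

variable {E : Finset (Sym2 V)} {α : ℝ}

/-- Central fibration identity: summing over samples with a fixed component of `s`,
with an extra condition on the exterior part, factorizes. -/
lemma fib_identity (s : V) (C : Finset V) (T : Finset (Sym2 V) → Prop) [DecidablePred T] :
    ∑ F ∈ E.powerset.filter (fun F => cmpt F s = C ∧ T (F ∩ eOut E C)), wt E α F
    = (∑ F₁ ∈ (eIn E C).powerset.filter (fun F₁ => cmpt F₁ s = C), wt (eIn E C) α F₁)
      * (∑ F₂ ∈ (eOut E C).powerset.filter T, wt (eOut E C) α F₂)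
      * (1 - α) ^ ((eBd E C).card) := by
  have hrhs : (∑ F₁ ∈ (eIn E C).powerset.filter (fun F₁ => cmpt F₁ s = C), wt (eIn E C) α F₁)
      * (∑ F₂ ∈ (eOut E C).powerset.filter T, wt (eOut E C) α F₂)
      * (1 - α) ^ ((eBd E C).card)
      = ∑ p ∈ ((eIn E C).powerset.filter (fun F₁ => cmpt F₁ s = C)
          ×ˢ (eOut E C).powerset.filter T),
          wt (eIn E C) α p.1 * wt (eOut E C) α p.2 * (1 - α) ^ ((eBd E C).card) := by
    rw [Finset.sum_mul_sum, Finset.sum_product]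
    rw [Finset.sum_mul]
    refine Finset.sum_congr rfl fun F₁ _ => ?_
    rw [Finset.sum_mul]
  rw [hrhs]
  refine Finset.sum_nbij' (fun F => (F ∩ eIn E C, F ∩ eOut E C)) (fun p => p.1 ∪ p.2) ?_ ?_ ?_ ?_ ?_
  · -- forward membership
    intro F hF
    rw [Finset.mem_filter, Finset.mem_powerset] at hF
    obtain ⟨hFE, hcomp, hT⟩ := hF
    rw [Finset.mem_product]
    constructor
    · rw [Finset.mem_filter, Finset.mem_powerset]
      refine ⟨Finset.inter_subset_right, ?_⟩
      -- cmpt (F ∩ eIn E C) s = C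
      ext c
      rw [mem_cmpt]
      constructor
      · intro h
        exact hcomp ▸ mem_cmpt.2 (Rch_mono Finset.inter_subset_left h)
      · intro hc
        have hsC : s ∈ C := hcomp ▸ self_mem_cmpt F s
        exact rch_inter_eIn hFE hcomp hsC (mem_cmpt.1 (hcomp ▸ hc))
    · rw [Finset.mem_filter, Finset.mem_powerset]
      exact ⟨Finset.inter_subset_right, hT⟩
  · -- backward membership
    rintro ⟨F₁, F₂⟩ hp
    rw [Finset.mem_product] at hp
    obtain ⟨h1, h2⟩ := hp
    rw [Finset.mem_filter, Finset.mem_powerset] at h1 h2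
    obtain ⟨h1s, h1c⟩ := h1
    obtain ⟨h2s, h2T⟩ := h2
    rw [Finset.mem_filter, Finset.mem_powerset]
    have hunion : (F₁ ∪ F₂) ∩ eOut E C = F₂ := by
      ext x
      rw [Finset.mem_inter, Finset.mem_union]
      constructor
      · rintro ⟨hx1 | hx1, hx2⟩
        · exact absurd hx2 (Finset.disjoint_left.1 (disjoint_eIn_eOut C) (h1s hx1))
        · exact hx1
      · intro hx
        exact ⟨Or.inr hx, h2s hx⟩
    refine ⟨Finset.union_subset (h1s.trans (eIn_subset C)) (h2s.trans (eOut_subset C)), ?_, ?_⟩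
    · exact cmpt_union h1s h2s h1c
    · rw [hunion]; exact h2T
  · -- left inverse
    intro F hF
    rw [Finset.mem_filter, Finset.mem_powerset] at hF
    obtain ⟨hFE, hcomp, _⟩ := hF
    ext x
    rw [Finset.mem_union, Finset.mem_inter, Finset.mem_inter]
    constructor
    · rintro (⟨h, _⟩ | ⟨h, _⟩) <;> exact h
    · intro hx
      rcases mem_eIn_or_eOut hFE hcomp hx with h | h
      · exact Or.inl ⟨hx, h⟩
      · exact Or.inr ⟨hx, h⟩
  · -- right inverse
    rintro ⟨F₁, F₂⟩ hp
    rw [Finset.mem_product] at hp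
    obtain ⟨h1, h2⟩ := hp
    rw [Finset.mem_filter, Finset.mem_powerset] at h1 h2
    have e1 : (F₁ ∪ F₂) ∩ eIn E C = F₁ := by
      ext x
      rw [Finset.mem_inter, Finset.mem_union]
      constructor
      · rintro ⟨hx1 | hx1, hx2⟩
        · exact hx1
        · exact absurd hx2 (Finset.disjoint_left.1 (disjoint_eIn_eOut C).symm (h2.1 hx1))
      · intro hx
        exact ⟨Or.inl hx, h1.1 hx⟩
    have e2 : (F₁ ∪ F₂) ∩ eOut E C = F₂ := by
      ext x
      rw [Finset.mem_inter, Finset.mem_union]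
      constructor
      · rintro ⟨hx1 | hx1, hx2⟩
        · exact absurd hx2 (Finset.disjoint_left.1 (disjoint_eIn_eOut C) (h1.1 hx1))
        · exact hx1
      · intro hx
        exact ⟨Or.inr hx, h2.1 hx⟩
    rw [Prod.mk.injEq]
    exact ⟨e1, e2⟩
  · -- weights
    intro F hF
    rw [Finset.mem_filter, Finset.mem_powerset] at hF
    obtain ⟨hFE, hcomp, _⟩ := hF
    have hrec : (F ∩ eIn E C) ∪ (F ∩ eOut E C) = F := by
      ext x
      rw [Finset.mem_union, Finset.mem_inter, Finset.mem_inter]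
      constructor
      · rintro (⟨h, _⟩ | ⟨h, _⟩) <;> exact h
      · intro hx
        rcases mem_eIn_or_eOut hFE hcomp hx with h | h
        · exact Or.inl ⟨hx, h⟩
        · exact Or.inr ⟨hx, h⟩
    calc wt E α F = wt E α ((F ∩ eIn E C) ∪ (F ∩ eOut E C)) := by rw [hrec]
      _ = wt (eIn E C) α (F ∩ eIn E C) * wt (eOut E C) α (F ∩ eOut E C)
            * (1 - α) ^ ((eBd E C).card) :=
          wt_factor C Finset.inter_subset_right Finset.inter_subset_right

/-- The decoupling inequality. -/
lemma Pr_decouple (hα0 : 0 ≤ α) (hα1 : α ≤ 1) (w a s b : V) :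
    Pr E α (fun F => Rch F w a ∧ Rch F s b ∧ ¬ Rch F w s)
      ≤ prox E α w a * Pr E α (fun F => Rch F s b ∧ ¬ Rch F s a) := by
  classical
  set xa := prox E α w a with hxa
  have hxa0 : 0 ≤ xa := prox_nonneg hα0 hα1 w a
  -- good components
  set good : Finset V → Prop := fun C => b ∈ C ∧ a ∉ C ∧ w ∉ C with hgood
  -- rewrite LHS as a sum over a filtered powerset
  have hLHS : Pr E α (fun F => Rch F w a ∧ Rch F s b ∧ ¬ Rch F w s)
      = ∑ F ∈ E.powerset.filter (fun F => Rch F w a ∧ Rch F s b ∧ ¬ Rch F w s), wt E α F :=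
    Pr_eq_sum_filter _
  -- fiber over components
  have hfiber : ∑ F ∈ E.powerset.filter (fun F => Rch F w a ∧ Rch F s b ∧ ¬ Rch F w s), wt E α F
      = ∑ C ∈ (Finset.univ : Finset (Finset V)),
          ∑ F ∈ (E.powerset.filter (fun F => Rch F w a ∧ Rch F s b ∧ ¬ Rch F w s)).filter
              (fun F => cmpt F s = C), wt E α F := by
    exact (Finset.sum_fiberwise_of_maps_to (fun F _ => Finset.mem_univ (cmpt F s)) _).symm
  -- each fiber with a good component is bounded
  have hterm : ∀ C : Finset V, good C →
      ∑ F ∈ (E.powerset.filter (fun F => Rch F w a ∧ Rch F s b ∧ ¬ Rch F w s)).filter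
          (fun F => cmpt F s = C), wt E α F
      ≤ xa * ∑ F ∈ E.powerset.filter (fun F => cmpt F s = C), wt E α F := by
    intro C hC
    obtain ⟨hbC, haC, hwC⟩ := hC
    -- identify the fiber
    have hset : (E.powerset.filter (fun F => Rch F w a ∧ Rch F s b ∧ ¬ Rch F w s)).filter
          (fun F => cmpt F s = C)
        = E.powerset.filter (fun F => cmpt F s = C ∧ Rch (F ∩ eOut E C) w a) := by
      rw [Finset.filter_filter]
      refine Finset.filter_congr fun F hF => ?_
      rw [Finset.mem_powerset] at hF
      constructor
      · rintro ⟨⟨hwa, hsb, hws⟩, hcomp⟩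
        exact ⟨hcomp, rch_inter_eOut hF hcomp hwC hwa⟩
      · rintro ⟨hcomp, hout⟩
        have hwa : Rch F w a := Rch_mono Finset.inter_subset_left hout
        refine ⟨⟨hwa, ?_, ?_⟩, hcomp⟩
        · exact mem_cmpt.1 (hcomp ▸ hbC)
        · intro hws
          exact hwC (hcomp ▸ mem_cmpt.2 (Rch_symm hws))
    have e1 : ∑ F ∈ E.powerset.filter (fun F => cmpt F s = C ∧ Rch (F ∩ eOut E C) w a), wt E α F
        = (∑ F₁ ∈ (eIn E C).powerset.filter (fun F₁ => cmpt F₁ s = C), wt (eIn E C) α F₁)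
          * (∑ F₂ ∈ (eOut E C).powerset.filter (fun F₂ => Rch F₂ w a), wt (eOut E C) α F₂)
          * (1 - α) ^ ((eBd E C).card) := fib_identity s C (fun F₂ => Rch F₂ w a)
    have e2 : ∑ F ∈ E.powerset.filter (fun F => cmpt F s = C), wt E α F
        = (∑ F₁ ∈ (eIn E C).powerset.filter (fun F₁ => cmpt F₁ s = C), wt (eIn E C) α F₁)
          * (∑ F₂ ∈ (eOut E C).powerset.filter (fun _ => True), wt (eOut E C) α F₂)
          * (1 - α) ^ ((eBd E C).card) := by
      calc ∑ F ∈ E.powerset.filter (fun F => cmpt F s = C), wt E α F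
          = ∑ F ∈ E.powerset.filter (fun F => cmpt F s = C ∧ True), wt E α F := by
            refine Finset.sum_congr ?_ (fun _ _ => rfl)
            exact Finset.filter_congr fun F _ => by simp
        _ = _ := fib_identity s C (fun _ => True)
    rw [hset, e1, e2]
    -- compare the middle factors
    have hmid : ∑ F₂ ∈ (eOut E C).powerset.filter (fun F₂ => Rch F₂ w a), wt (eOut E C) α F₂
        ≤ xa := by
      have h1 : ∑ F₂ ∈ (eOut E C).powerset.filter (fun F₂ => Rch F₂ w a), wt (eOut E C) α F₂
          = Pr (eOut E C) α (fun F₂ => Rch F₂ w a) := (Pr_eq_sum_filter _).symm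
      rw [h1, hxa, prox_eq_Pr]
      exact Pr_mono_ground hα0 hα1 (eOut_subset C) (fun F F' hsub => Rch_mono hsub)
    have hmid2 : ∑ F₂ ∈ (eOut E C).powerset.filter (fun _ => True), wt (eOut E C) α F₂ = 1 := by
      have h2 : ∑ F₂ ∈ (eOut E C).powerset.filter (fun _ => True), wt (eOut E C) α F₂
          = Pr (eOut E C) α (fun _ => True) := (Pr_eq_sum_filter _).symm
      rw [h2, Pr_true_eq_one hα0 hα1]
    rw [hmid2, mul_one]
    have hA : 0 ≤ ∑ F₁ ∈ (eIn E C).powerset.filter (fun F₁ => cmpt F₁ s = C), wt (eIn E C) α F₁ :=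
      Finset.sum_nonneg fun F₁ _ => wt_nonneg hα0 hα1 _ _
    have hpow : (0:ℝ) ≤ (1 - α) ^ ((eBd E C).card) := pow_nonneg (by linarith) _
    calc (∑ F₁ ∈ (eIn E C).powerset.filter (fun F₁ => cmpt F₁ s = C), wt (eIn E C) α F₁)
          * (∑ F₂ ∈ (eOut E C).powerset.filter (fun F₂ => Rch F₂ w a), wt (eOut E C) α F₂)
          * (1 - α) ^ ((eBd E C).card)
        ≤ (∑ F₁ ∈ (eIn E C).powerset.filter (fun F₁ => cmpt F₁ s = C), wt (eIn E C) α F₁)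
          * xa * (1 - α) ^ ((eBd E C).card) := by
          apply mul_le_mul_of_nonneg_right _ hpow
          exact mul_le_mul_of_nonneg_left hmid hA
      _ = xa * ((∑ F₁ ∈ (eIn E C).powerset.filter (fun F₁ => cmpt F₁ s = C), wt (eIn E C) α F₁)
          * (1 - α) ^ ((eBd E C).card)) := by ring
  -- bad components give zero
  have hbad : ∀ C : Finset V, ¬ good C →
      ∑ F ∈ (E.powerset.filter (fun F => Rch F w a ∧ Rch F s b ∧ ¬ Rch F w s)).filter
          (fun F => cmpt F s = C), wt E α F = 0 := by
    intro C hC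
    refine Finset.sum_eq_zero fun F hF => ?_
    exfalso
    rw [Finset.filter_filter, Finset.mem_filter, Finset.mem_powerset] at hF
    obtain ⟨hFE, ⟨hwa, hsb, hws⟩, hcomp⟩ := hF
    refine hC ?_
    refine ⟨hcomp ▸ mem_cmpt.2 hsb, ?_, ?_⟩
    · intro haC
      exact hws (Rch_trans hwa (Rch_symm (mem_cmpt.1 (hcomp ▸ haC))))
    · intro hwC
      exact hws (Rch_symm (mem_cmpt.1 (hcomp ▸ hwC)))
  -- assemble
  rw [hLHS, hfiber]
  rw [← Finset.sum_filter_add_sum_filter_not (Finset.univ : Finset (Finset V)) good]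
  have hz : ∑ C ∈ (Finset.univ : Finset (Finset V)).filter (fun C => ¬ good C),
      ∑ F ∈ (E.powerset.filter (fun F => Rch F w a ∧ Rch F s b ∧ ¬ Rch F w s)).filter
          (fun F => cmpt F s = C), wt E α F = 0 :=
    Finset.sum_eq_zero fun C hC => hbad C (Finset.mem_filter.1 hC).2
  rw [hz, add_zero]
  have hstep : ∑ C ∈ (Finset.univ : Finset (Finset V)).filter good,
      ∑ F ∈ (E.powerset.filter (fun F => Rch F w a ∧ Rch F s b ∧ ¬ Rch F w s)).filter
          (fun F => cmpt F s = C), wt E α F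
      ≤ ∑ C ∈ (Finset.univ : Finset (Finset V)).filter good,
          xa * ∑ F ∈ E.powerset.filter (fun F => cmpt F s = C), wt E α F := by
    refine Finset.sum_le_sum fun C hC => hterm C (Finset.mem_filter.1 hC).2
  refine hstep.trans ?_
  rw [← Finset.mul_sum]
  apply mul_le_mul_of_nonneg_left _ hxa0
  -- sum of good fibers is at most Pr of the target event
  have hfib2 : ∑ C ∈ (Finset.univ : Finset (Finset V)).filter good,
      ∑ F ∈ E.powerset.filter (fun F => cmpt F s = C), wt E α F
      = ∑ F ∈ E.powerset.filter (fun F => good (cmpt F s)), wt E α F := by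
    have hcongr : ∀ C ∈ (Finset.univ : Finset (Finset V)).filter good,
        ∑ F ∈ E.powerset.filter (fun F => cmpt F s = C), wt E α F
        = ∑ F ∈ (E.powerset.filter (fun F => good (cmpt F s))).filter
            (fun F => cmpt F s = C), wt E α F := by
      intro C hC
      have hCgood : good C := (Finset.mem_filter.1 hC).2
      congr 1
      rw [Finset.filter_filter]
      refine Finset.filter_congr fun F _ => ?_
      constructor
      · intro h; exact ⟨h ▸ hCgood, h⟩
      · rintro ⟨_, h⟩; exact h
    rw [Finset.sum_congr rfl hcongr]
    exact Finset.sum_fiberwise_of_maps_to (g := fun F => cmpt F s)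
      (t := (Finset.univ : Finset (Finset V)).filter good)
      (fun F hF => Finset.mem_filter.2 ⟨Finset.mem_univ _, (Finset.mem_filter.1 hF).2⟩) _
  rw [hfib2]
  have hPr : ∑ F ∈ E.powerset.filter (fun F => good (cmpt F s)), wt E α F
      = Pr E α (fun F => good (cmpt F s)) := (Pr_eq_sum_filter _).symm
  rw [hPr]
  refine Pr_mono_event hα0 hα1 fun F _ hF => ?_
  obtain ⟨hb, ha, _⟩ := hF
  exact ⟨mem_cmpt.1 hb, fun hc => ha (mem_cmpt.2 hc)⟩

end CCaux
namespace CCaux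

variable {E : Finset (Sym2 V)} {α : ℝ}

lemma claimE_core (hα0 : 0 ≤ α) (hα1 : α ≤ 1) (a b : V) (he : s(a, b) ∉ E)
    {X : Finset V} {L : ℝ}
    (sa : V) (hsa : sa ∈ X)
    (hPP : ∀ s ∈ X, prox E α b s ≤ prox E α a sa)
    (hcov : ∀ w, ∃ s ∈ X, L ≤ prox (insert (s(a, b)) E) α w s) :
    ∀ w, ∃ s ∈ insert b X, L / 2 ≤ prox E α w s := by
  intro w
  obtain ⟨s1, hs1, hL⟩ := hcov w
  obtain ⟨sM, hsM, hMax⟩ := Finset.exists_max_image (insert b X) (fun s => prox E α w s)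
    ⟨b, Finset.mem_insert_self b X⟩
  set M := prox E α w sM with hM
  have hM0 : 0 ≤ M := prox_nonneg hα0 hα1 w sM
  refine ⟨sM, hsM, ?_⟩
  -- abbreviations
  set γ := prox E α s1 a with hγ
  set δ := prox E α s1 b with hδ
  have hγ0 : 0 ≤ γ := prox_nonneg hα0 hα1 s1 a
  have hγ1 : γ ≤ 1 := prox_le_one hα0 hα1 s1 a
  have hδ0 : 0 ≤ δ := prox_nonneg hα0 hα1 s1 b
  have hxa0 : 0 ≤ prox E α w a := prox_nonneg hα0 hα1 w a
  -- the decomposition of the augmented proximity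
  have hQab0 : 0 ≤ Pr E α (fun F => Rch F w a ∧ Rch F s1 b ∧ ¬ Rch F w s1) :=
    Pr_nonneg hα0 hα1 _
  have hQba0 : 0 ≤ Pr E α (fun F => Rch F w b ∧ Rch F s1 a ∧ ¬ Rch F w s1) :=
    Pr_nonneg hα0 hα1 _
  have hdecomp : prox (insert (s(a, b)) E) α w s1
      ≤ prox E α w s1
        + (Pr E α (fun F => Rch F w a ∧ Rch F s1 b ∧ ¬ Rch F w s1)
          + Pr E α (fun F => Rch F w b ∧ Rch F s1 a ∧ ¬ Rch F w s1)) := by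
    rw [prox_eq_Pr, Pr_insert he]
    have hsplit : Pr E α (fun F => Rch (insert (s(a, b)) F) w s1)
        ≤ Pr E α (fun F => Rch F w s1)
          + (Pr E α (fun F => Rch F w a ∧ Rch F s1 b ∧ ¬ Rch F w s1)
            + Pr E α (fun F => Rch F w b ∧ Rch F s1 a ∧ ¬ Rch F w s1)) := by
      have hincl : Pr E α (fun F => Rch (insert (s(a, b)) F) w s1)
          ≤ Pr E α (fun F => Rch F w s1
              ∨ ((Rch F w a ∧ Rch F s1 b ∧ ¬ Rch F w s1)
                ∨ (Rch F w b ∧ Rch F s1 a ∧ ¬ Rch F w s1))) := by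
        refine Pr_mono_event hα0 hα1 fun F _ h => ?_
        by_cases hws1 : Rch F w s1
        · exact Or.inl hws1
        · rcases Rch_insert_cases h with h1 | ⟨h2, h3⟩ | ⟨h2, h3⟩
          · exact absurd h1 hws1
          · exact Or.inr (Or.inl ⟨h2, Rch_symm h3, hws1⟩)
          · exact Or.inr (Or.inr ⟨h2, Rch_symm h3, hws1⟩)
      refine hincl.trans ?_
      refine (Pr_union_le hα0 hα1 _ _).trans ?_
      gcongr
      exact Pr_union_le hα0 hα1 _ _
    have hp0 : 0 ≤ Pr E α (fun F => Rch F w s1) := Pr_nonneg hα0 hα1 _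
    have hp1 : Pr E α (fun F => Rch F w s1) ≤ 1 := Pr_le_one hα0 hα1 _
    rw [prox_eq_Pr]
    nlinarith [hsplit, hQab0, hQba0]
  -- bounds on the three terms
  have ht1 : prox E α w s1 ≤ M := hMax s1 (Finset.mem_insert_of_mem hs1)
  have htb : prox E α w b ≤ M := hMax b (Finset.mem_insert_self b X)
  have hta : prox E α w a * prox E α a sa ≤ M :=
    (prox_mul_le hα0 hα1 w a sa).trans (hMax sa (Finset.mem_insert_of_mem hsa))
  have hxaδ : prox E α w a * δ ≤ M := by
    have h1 : δ ≤ prox E α a sa := by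
      rw [hδ, prox_comm]
      exact hPP s1 hs1
    calc prox E α w a * δ ≤ prox E α w a * prox E α a sa :=
          mul_le_mul_of_nonneg_left h1 hxa0
      _ ≤ M := hta
  have ht2 : Pr E α (fun F => Rch F w a ∧ Rch F s1 b ∧ ¬ Rch F w s1) ≤ M * (1 - γ) := by
    have hd : Pr E α (fun F => Rch F w a ∧ Rch F s1 b ∧ ¬ Rch F w s1)
        ≤ prox E α w a * Pr E α (fun F => Rch F s1 b ∧ ¬ Rch F s1 a) :=
      Pr_decouple hα0 hα1 w a s1 b
    have hsplitδ : Pr E α (fun F => Rch F s1 b)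
        = Pr E α (fun F => Rch F s1 b ∧ Rch F s1 a)
          + Pr E α (fun F => Rch F s1 b ∧ ¬ Rch F s1 a) :=
      Pr_split _ _
    have hharris : δ * γ ≤ Pr E α (fun F => Rch F s1 b ∧ Rch F s1 a) := by
      rw [hδ, hγ, prox_eq_Pr, prox_eq_Pr]
      exact Pr_harris hα0 hα1 (fun F F' h => Rch_mono h) (fun F F' h => Rch_mono h)
    have h5 : Pr E α (fun F => Rch F s1 b ∧ ¬ Rch F s1 a) ≤ δ * (1 - γ) := by
      have : Pr E α (fun F => Rch F s1 b) = δ := (prox_eq_Pr E α s1 b).symm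
      nlinarith [hsplitδ, hharris]
    calc Pr E α (fun F => Rch F w a ∧ Rch F s1 b ∧ ¬ Rch F w s1)
        ≤ prox E α w a * (δ * (1 - γ)) := by
          refine hd.trans ?_
          exact mul_le_mul_of_nonneg_left h5 hxa0
      _ = (prox E α w a * δ) * (1 - γ) := by ring
      _ ≤ M * (1 - γ) := mul_le_mul_of_nonneg_right hxaδ (by linarith)
  have ht3 : Pr E α (fun F => Rch F w b ∧ Rch F s1 a ∧ ¬ Rch F w s1) ≤ M * γ := by
    have hd : Pr E α (fun F => Rch F w b ∧ Rch F s1 a ∧ ¬ Rch F w s1)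
        ≤ prox E α w b * Pr E α (fun F => Rch F s1 a ∧ ¬ Rch F s1 b) :=
      Pr_decouple hα0 hα1 w b s1 a
    have h6 : Pr E α (fun F => Rch F s1 a ∧ ¬ Rch F s1 b) ≤ γ := by
      rw [hγ, prox_eq_Pr]
      exact Pr_mono_event hα0 hα1 fun F _ h => h.1
    have hxb0 : 0 ≤ prox E α w b := prox_nonneg hα0 hα1 w b
    calc Pr E α (fun F => Rch F w b ∧ Rch F s1 a ∧ ¬ Rch F w s1)
        ≤ prox E α w b * γ := hd.trans (mul_le_mul_of_nonneg_left h6 hxb0)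
      _ ≤ M * γ := mul_le_mul_of_nonneg_right htb hγ0
  -- assemble
  have : L ≤ 2 * M := by
    have := hL.trans hdecomp
    nlinarith [this, ht1, ht2, ht3]
  linarith

lemma claimE (hα0 : 0 ≤ α) (hα1 : α ≤ 1) {e : Sym2 V} (he : e ∉ E)
    {X : Finset V} (hX : X.Nonempty) {L : ℝ}
    (hcov : ∀ w, ∃ s ∈ X, L ≤ prox (insert e E) α w s) :
    ∃ c : V, ∀ w, ∃ s ∈ insert c X, L / 2 ≤ prox E α w s := by
  obtain ⟨a, b, rfl⟩ := sym2_cases e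
  obtain ⟨sa, hsa, hsaMax⟩ := Finset.exists_max_image X (fun s => prox E α a s) hX
  obtain ⟨sb, hsb, hsbMax⟩ := Finset.exists_max_image X (fun s => prox E α b s) hX
  by_cases hcmp : prox E α b sb ≤ prox E α a sa
  · exact ⟨b, claimE_core hα0 hα1 a b he sa hsa
      (fun s hs => (hsbMax s hs).trans hcmp) hcov⟩
  · push_neg at hcmp
    rw [Sym2.eq_swap] at he hcov
    exact ⟨a, claimE_core hα0 hα1 b a he sb hsb
      (fun s hs => (hsaMax s hs).trans hcmp.le) hcov⟩

end CCaux
namespace CCaux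

variable {α : ℝ}

lemma peel (hα0 : 0 ≤ α) (hα1 : α ≤ 1) (E : Finset (Sym2 V)) (Fst : Finset (Sym2 V)) :
    (∀ f ∈ Fst, f ∉ E) → ∀ (X : Finset V), X.Nonempty → ∀ L : ℝ,
    (∀ w, ∃ s ∈ X, L ≤ prox (E ∪ Fst) α w s) →
    ∃ X' : Finset V, X'.card ≤ X.card + Fst.card ∧
      ∀ w, ∃ s ∈ X', L / 2 ^ Fst.card ≤ prox E α w s := by
  induction Fst using Finset.induction_on with
  | empty =>
      intro _ X hX L hcov
      refine ⟨X, by simp, fun w => ?_⟩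
      obtain ⟨s, hs, h⟩ := hcov w
      refine ⟨s, hs, ?_⟩
      rw [Finset.union_empty] at h
      simpa using h
  | @insert f Fst' hf ih =>
      intro hdisj X hX L hcov
      have hfE : f ∉ E := hdisj f (Finset.mem_insert_self f Fst')
      have hfE' : f ∉ E ∪ Fst' := by
        simp only [Finset.mem_union, not_or]
        exact ⟨hfE, hf⟩
      have hcov' : ∀ w, ∃ s ∈ X, L ≤ prox (insert f (E ∪ Fst')) α w s := by
        intro w
        obtain ⟨s, hs, h⟩ := hcov w
        exact ⟨s, hs, by rwa [Finset.union_insert] at h⟩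
      obtain ⟨c, hcov2⟩ := claimE hα0 hα1 hfE' hX hcov'
      obtain ⟨X', hcard, hcov3⟩ := ih (fun g hg => hdisj g (Finset.mem_insert_of_mem hg))
        (insert c X) ⟨c, Finset.mem_insert_self c X⟩ (L / 2) hcov2
      refine ⟨X', ?_, fun w => ?_⟩
      · calc X'.card ≤ (insert c X).card + Fst'.card := hcard
          _ ≤ (X.card + 1) + Fst'.card := by
              exact add_le_add_left (Finset.card_insert_le c X) _
          _ = X.card + (insert f Fst').card := by
              rw [Finset.card_insert_of_notMem hf]; ring
      · obtain ⟨s, hs, h⟩ := hcov3 w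
        refine ⟨s, hs, ?_⟩
        rw [div_div] at h
        rw [Finset.card_insert_of_notMem hf, pow_succ']
        exact h

end CCaux

theorem close_center'
    (E : Finset (Sym2 V)) (α : ℝ) (hα0 : 0 ≤ α) (hα1 : α ≤ 1) (k : ℕ) :
    ∃ X : Finset V, X.card ≤ k + 1 ∧
      ∀ w : V, ∃ s ∈ X, optBroadcast E α k / 2 ^ (k + 1) ≤ prox E α w s := by
  classical
  by_cases hV : IsEmpty V
  · exact ⟨∅, by simp, fun w => (hV.false w).elim⟩
  have hVne : Nonempty V := not_isEmpty_iff.mp hV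
  obtain ⟨v0⟩ := hVne
  haveI hne : Nonempty {F : Finset (Sym2 V) // F.card ≤ k ∧ ∀ e ∈ F, e ∉ E} :=
    ⟨⟨∅, by simp⟩⟩
  obtain ⟨Fopt, hFopt⟩ := Finite.exists_max
    (fun F : {F : Finset (Sym2 V) // F.card ≤ k ∧ ∀ e ∈ F, e ∉ E} => broadcast (E ∪ F.1) α)
  set β := optBroadcast E α k with hβdef
  have hβle : β ≤ broadcast (E ∪ Fopt.1) α := ciSup_le hFopt
  have hβ0 : 0 ≤ β := by
    have h1 : (0:ℝ) ≤ broadcast (E ∪ (∅ : Finset (Sym2 V))) α :=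
      Real.iInf_nonneg fun p => CCaux.prox_nonneg hα0 hα1 _ _
    have h2 : broadcast (E ∪ (⟨∅, by simp⟩ :
        {F : Finset (Sym2 V) // F.card ≤ k ∧ ∀ e ∈ F, e ∉ E}).1) α ≤ β := by
      rw [hβdef]
      unfold optBroadcast
      exact le_ciSup
        (f := fun F : {F : Finset (Sym2 V) // F.card ≤ k ∧ ∀ e ∈ F, e ∉ E} =>
          broadcast (E ∪ F.1) α)
        ((Set.finite_range _).bddAbove)
        (⟨∅, by simp⟩ : {F : Finset (Sym2 V) // F.card ≤ k ∧ ∀ e ∈ F, e ∉ E})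
    exact le_trans h1 h2
  have hβ1 : β ≤ 1 := by
    refine ciSup_le fun F => ?_
    by_cases hnt : Nontrivial V
    · obtain ⟨x, y, hxy⟩ := hnt
      have h1 : broadcast (E ∪ F.1) α ≤ prox (E ∪ F.1) α x y := by
        unfold broadcast
        exact ciInf_le
          (f := fun p : {p : V × V // p.1 ≠ p.2} => prox (E ∪ F.1) α p.1.1 p.1.2)
          ((Set.finite_range _).bddBelow) ⟨(x, y), hxy⟩
      exact h1.trans (CCaux.prox_le_one hα0 hα1 x y)
    · have hsub : Subsingleton V := not_nontrivial_iff_subsingleton.mp hnt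
      haveI : IsEmpty {p : V × V // p.1 ≠ p.2} :=
        ⟨fun p => p.2 (Subsingleton.elim _ _)⟩
      have : broadcast (E ∪ F.1) α = 0 := Real.iInf_of_isEmpty _
      rw [this]; norm_num
  have hcov : ∀ w, ∃ s ∈ ({v0} : Finset V), β ≤ prox (E ∪ Fopt.1) α w s := by
    intro w
    refine ⟨v0, Finset.mem_singleton_self v0, ?_⟩
    by_cases hw : w = v0
    · subst hw
      rw [CCaux.prox_self hα0 hα1]
      exact hβ1
    · have h1 : broadcast (E ∪ Fopt.1) α ≤ prox (E ∪ Fopt.1) α w v0 := by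
        unfold broadcast
        exact ciInf_le
          (f := fun p : {p : V × V // p.1 ≠ p.2} => prox (E ∪ Fopt.1) α p.1.1 p.1.2)
          ((Set.finite_range _).bddBelow) ⟨(w, v0), hw⟩
      exact hβle.trans h1
  obtain ⟨X', hcard, hcov'⟩ := CCaux.peel hα0 hα1 E Fopt.1 Fopt.2.2 {v0}
    ⟨v0, Finset.mem_singleton_self v0⟩ β hcov
  refine ⟨X', ?_, fun w => ?_⟩
  · calc X'.card ≤ ({v0} : Finset V).card + Fopt.1.card := hcard
      _ = 1 + Fopt.1.card := by rw [Finset.card_singleton]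
      _ ≤ 1 + k := by exact add_le_add_right Fopt.2.1 1
      _ = k + 1 := by omega
  · obtain ⟨s, hs, h⟩ := hcov' w
    refine ⟨s, hs, le_trans ?_ h⟩
    refine div_le_div_of_nonneg_left hβ0 (pow_pos two_pos _) ?_
    exact pow_le_pow_right₀ (by norm_num) (by omega : Fopt.1.card ≤ k + 1)

end CCproof

/-- close-center lemma. There are at most `k + 1` centers such that
every vertex has proximity at least `β*/2^{k+1}` to some center. -/
theorem close_center
    (E : Finset (Sym2 V)) (α : ℝ) (hα0 : 0 ≤ α) (hα1 : α ≤ 1) (k : ℕ) :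
    ∃ X : Finset V, X.card ≤ k + 1 ∧
      ∀ w : V, ∃ s ∈ X, optBroadcast E α k / 2 ^ (k + 1) ≤ prox E α w s := by
  exact close_center' E α hα0 hα1 k
end

section
/- Constant-witness existence (part i): For any instance (G = (V, E, α), k) of Broadcast Improvement with k ≥ 2 and optimum broadcast β*, there exists a set S ⊆ V² ∖ E of size at most 7k − 6 such that for every pair of vertices u, v ∈ V there exists a subset W_{uv} ⊆ S of size at most 3 with prox_{G + W_{uv}}(u, v) ≥ 4β* / (12k⁴ + 3k²); that is, S is a (3, 4β*/(12k⁴ + 3k²))-witnessing solution of size at most 7k − 6. -/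
open scoped Classical

variable {V : Type*} [Fintype V] [DecidableEq V]

open Finset SimpleGraph

set_option linter.unusedSectionVars false
set_option maxHeartbeats 1000000

noncomputable def prE (s : Finset (Sym2 V)) (α : ℝ) (A : Finset (Sym2 V) → Prop) : ℝ :=
  ∑ F ∈ s.powerset, if A F then α ^ F.card * (1 - α) ^ (s \ F).card else 0

variable {α : ℝ}

lemma w_nonneg (hα0 : 0 ≤ α) (hα1 : α ≤ 1) (s F : Finset (Sym2 V)) :
    0 ≤ α ^ F.card * (1 - α) ^ (s \ F).card :=
  mul_nonneg (pow_nonneg hα0 _) (pow_nonneg (by linarith) _)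

lemma prE_nonneg (hα0 : 0 ≤ α) (hα1 : α ≤ 1) (s : Finset (Sym2 V))
    (A : Finset (Sym2 V) → Prop) : 0 ≤ prE s α A := by
  refine Finset.sum_nonneg fun F _ => ?_
  split
  · exact w_nonneg hα0 hα1 s F
  · exact le_rfl

lemma sum_w (s : Finset (Sym2 V)) :
    ∑ F ∈ s.powerset, α ^ F.card * (1 - α) ^ (s \ F).card = 1 := by
  have h := Finset.prod_add (fun _ : Sym2 V => α) (fun _ => 1 - α) s
  simp only [Finset.prod_const] at h
  rw [← h]
  simp

lemma prE_true (s : Finset (Sym2 V)) {A : Finset (Sym2 V) → Prop}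
    (h : ∀ F ∈ s.powerset, A F) : prE s α A = 1 := by
  have : prE s α A = ∑ F ∈ s.powerset, α ^ F.card * (1 - α) ^ (s \ F).card :=
    Finset.sum_congr rfl fun F hF => if_pos (h F hF)
  rw [this, sum_w]

lemma prE_le_one (hα0 : 0 ≤ α) (hα1 : α ≤ 1) (s : Finset (Sym2 V))
    (A : Finset (Sym2 V) → Prop) : prE s α A ≤ 1 := by
  have : prE s α A ≤ ∑ F ∈ s.powerset, α ^ F.card * (1 - α) ^ (s \ F).card := by
    refine Finset.sum_le_sum fun F _ => ?_
    split
    · exact le_rfl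
    · exact w_nonneg hα0 hα1 s F
  rw [sum_w] at this; exact this

lemma prE_mono (hα0 : 0 ≤ α) (hα1 : α ≤ 1) (s : Finset (Sym2 V))
    {A B : Finset (Sym2 V) → Prop} (h : ∀ F ⊆ s, A F → B F) :
    prE s α A ≤ prE s α B := by
  refine Finset.sum_le_sum fun F hF => ?_
  rw [Finset.mem_powerset] at hF
  by_cases hA : A F
  · rw [if_pos hA, if_pos (h F hF hA)]
  · rw [if_neg hA]
    split
    · exact w_nonneg hα0 hα1 s F
    · exact le_rfl

lemma prE_union_bound {ι : Type*} (hα0 : 0 ≤ α) (hα1 : α ≤ 1) (s : Finset (Sym2 V))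
    {A : Finset (Sym2 V) → Prop} {I : Finset ι} {B : ι → Finset (Sym2 V) → Prop}
    (h : ∀ F ⊆ s, A F → ∃ i ∈ I, B i F) :
    prE s α A ≤ ∑ i ∈ I, prE s α (B i) := by
  calc prE s α A
      ≤ ∑ F ∈ s.powerset, ∑ i ∈ I,
          (if B i F then α ^ F.card * (1 - α) ^ (s \ F).card else 0) := by
        refine Finset.sum_le_sum fun F hF => ?_
        by_cases hA : A F
        · rw [if_pos hA]
          obtain ⟨i₀, hi₀, hB⟩ := h F (Finset.mem_powerset.1 hF) hA
          refine Finset.single_le_sum (f := fun i =>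
            (if B i F then α ^ F.card * (1 - α) ^ (s \ F).card else 0)) (fun i _ => ?_) hi₀
              |>.trans_eq' (by rw [if_pos hB])
          split
          · exact w_nonneg hα0 hα1 s F
          · exact le_rfl
        · rw [if_neg hA]
          refine Finset.sum_nonneg fun i _ => ?_
          split
          · exact w_nonneg hα0 hα1 s F
          · exact le_rfl
    _ = ∑ i ∈ I, prE s α (B i) := Finset.sum_comm

lemma w_out {s F : Finset (Sym2 V)} {d : Sym2 V} (hd : d ∉ s) (hF : F ⊆ s) :
    α ^ F.card * (1 - α) ^ ((insert d s) \ F).card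
      = (1 - α) * (α ^ F.card * (1 - α) ^ (s \ F).card) := by
  have h1 : (insert d s) \ F = insert d (s \ F) := by
    ext x; simp only [mem_sdiff, mem_insert]
    constructor
    · rintro ⟨h | h, hx⟩
      · exact Or.inl h
      · exact Or.inr ⟨h, hx⟩
    · rintro (rfl | ⟨h, hx⟩)
      · exact ⟨Or.inl rfl, fun hc => hd (hF hc)⟩
      · exact ⟨Or.inr h, hx⟩
  have h2 : d ∉ s \ F := fun hc => hd (mem_sdiff.1 hc).1
  rw [h1, Finset.card_insert_of_notMem h2, pow_succ]
  ring

lemma w_in {s F : Finset (Sym2 V)} {d : Sym2 V} (hd : d ∉ s) (hF : F ⊆ s) :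
    α ^ (insert d F).card * (1 - α) ^ ((insert d s) \ (insert d F)).card
      = α * (α ^ F.card * (1 - α) ^ (s \ F).card) := by
  have hdF : d ∉ F := fun hc => hd (hF hc)
  have h1 : (insert d s) \ (insert d F) = s \ F := by
    ext x; simp only [mem_sdiff, mem_insert]
    constructor
    · rintro ⟨h | h, hx⟩
      · exact absurd (Or.inl h) hx
      · exact ⟨h, fun hc => hx (Or.inr hc)⟩
    · rintro ⟨h, hx⟩
      refine ⟨Or.inr h, ?_⟩
      rintro (rfl | hc)
      · exact hd h
      · exact hx hc
  rw [h1, Finset.card_insert_of_notMem hdF, pow_succ]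
  ring

lemma prE_congr {s : Finset (Sym2 V)} {B C : Finset (Sym2 V) → Prop}
    (h : ∀ F ⊆ s, (B F ↔ C F)) : prE s α B = prE s α C :=
  Finset.sum_congr rfl fun F hF => if_congr (h F (Finset.mem_powerset.1 hF)) rfl rfl

lemma prE_false {s : Finset (Sym2 V)} {B : Finset (Sym2 V) → Prop}
    (h : ∀ F ⊆ s, ¬ B F) : prE s α B = 0 :=
  Finset.sum_eq_zero fun F hF => if_neg (h F (Finset.mem_powerset.1 hF))

lemma prE_insert {s : Finset (Sym2 V)} {d : Sym2 V} (hd : d ∉ s)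
    (B : Finset (Sym2 V) → Prop) :
    prE (insert d s) α B
      = (1 - α) * prE s α B + α * prE s α (fun F => B (insert d F)) := by
  rw [prE, Finset.sum_powerset_insert hd, prE, prE, Finset.mul_sum, Finset.mul_sum]
  congr 1
  · refine Finset.sum_congr rfl fun F hF => ?_
    rw [Finset.mem_powerset] at hF
    rw [mul_ite, mul_zero]
    refine if_congr Iff.rfl (w_out hd hF) rfl
  · refine Finset.sum_congr rfl fun F hF => ?_
    rw [Finset.mem_powerset] at hF
    rw [mul_ite, mul_zero]
    refine if_congr Iff.rfl (w_in hd hF) rfl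

/-- Marginalization + forced presence of `D' ⊆ D` on disjoint added edges. -/
lemma prE_factor {E D : Finset (Sym2 V)} (hD : ∀ d ∈ D, d ∉ E)
    {D' : Finset (Sym2 V)} (hD' : D' ⊆ D) (A : Finset (Sym2 V) → Prop) :
    prE (E ∪ D) α (fun F => A (F ∩ E) ∧ D' ⊆ F) = α ^ D'.card * prE E α A := by
  classical
  induction D using Finset.induction generalizing D' with
  | empty =>
    have hD'e : D' = ∅ := Finset.subset_empty.1 hD'
    subst hD'e
    rw [Finset.union_empty, Finset.card_empty, pow_zero, one_mul]
    refine prE_congr fun F hF => ?_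
    rw [Finset.inter_eq_left.2 hF]
    simp
  | @insert d D₀ hdD₀ ih =>
    have hdE : d ∉ E := hD d (Finset.mem_insert_self d D₀)
    have hdU : d ∉ E ∪ D₀ := by
      simp only [Finset.mem_union]
      rintro (h | h)
      · exact hdE h
      · exact hdD₀ h
    have hD₀ : ∀ e ∈ D₀, e ∉ E := fun e he => hD e (Finset.mem_insert_of_mem he)
    rw [Finset.union_insert, prE_insert hdU]
    by_cases hdD' : d ∈ D'
    · have hDe : D'.erase d ⊆ D₀ := by
        intro x hx
        rcases Finset.mem_insert.1 (hD' (Finset.mem_of_mem_erase hx)) with rfl | h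
        · exact absurd rfl (Finset.ne_of_mem_erase hx)
        · exact h
      have z1 : prE (E ∪ D₀) α (fun F => A (F ∩ E) ∧ D' ⊆ F) = 0 := by
        refine prE_false fun F hF => ?_
        rintro ⟨-, hsub⟩
        exact hdU (hF (hsub hdD'))
      have z2 : prE (E ∪ D₀) α (fun F => A ((insert d F) ∩ E) ∧ D' ⊆ insert d F)
          = α ^ (D'.erase d).card * prE E α A := by
        rw [show (fun F => A ((insert d F) ∩ E) ∧ D' ⊆ insert d F)
            = (fun F => A (F ∩ E) ∧ D'.erase d ⊆ F) from ?_]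
        · exact ih hD₀ hDe
        · funext F
          rw [Finset.insert_inter_of_notMem hdE, Finset.subset_insert_iff]
      rw [z1, z2, mul_zero, zero_add, ← mul_assoc, ← pow_succ']
      rw [Finset.card_erase_of_mem hdD']
      congr 2
      have : 1 ≤ D'.card := Finset.card_pos.2 ⟨d, hdD'⟩
      omega
    · have hDe : D' ⊆ D₀ := by
        intro x hx
        rcases Finset.mem_insert.1 (hD' hx) with rfl | h
        · exact absurd hx hdD'
        · exact h
      have z2 : prE (E ∪ D₀) α (fun F => A ((insert d F) ∩ E) ∧ D' ⊆ insert d F)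
          = prE (E ∪ D₀) α (fun F => A (F ∩ E) ∧ D' ⊆ F) := by
        refine prE_congr fun F hF => ?_
        rw [Finset.insert_inter_of_notMem hdE, Finset.subset_insert_iff,
          Finset.erase_eq_of_notMem hdD']
      rw [z2, ih hD₀ hDe]
      ring

/-- Conditioning a monotone event on the presence of an edge of the ground set. -/
lemma prE_cond_edge (hα0 : 0 ≤ α) (hα1 : α ≤ 1) {E : Finset (Sym2 V)} {e : Sym2 V}
    (he : e ∈ E) {A : Finset (Sym2 V) → Prop}
    (mono : ∀ G G', G ⊆ G' → A G → A G') :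
    α * prE E α A ≤ prE E α (fun G => A G ∧ e ∈ G) := by
  classical
  have hE : E = insert e (E.erase e) := (Finset.insert_erase he).symm
  have hne : e ∉ E.erase e := Finset.notMem_erase e E
  rw [hE, prE_insert hne, prE_insert hne]
  have z1 : prE (E.erase e) α (fun G => A G ∧ e ∈ G) = 0 :=
    prE_false fun G hG hc => hne (hG hc.2)
  have z2 : prE (E.erase e) α (fun G => A (insert e G) ∧ e ∈ insert e G)
      = prE (E.erase e) α (fun G => A (insert e G)) :=
    prE_congr fun G _ => by simp [Finset.mem_insert_self]
  have hmono : prE (E.erase e) α A ≤ prE (E.erase e) α (fun G => A (insert e G)) :=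
    prE_mono hα0 hα1 _ (fun G _ hA => mono G (insert e G) (Finset.subset_insert e G) hA)
  have hb : 0 ≤ prE (E.erase e) α (fun G => A (insert e G)) := prE_nonneg hα0 hα1 _ _
  rw [z1, z2, mul_zero, zero_add]
  have h1 : (0:ℝ) ≤ α * (1 - α) := mul_nonneg hα0 (by linarith)
  nlinarith [mul_le_mul_of_nonneg_left hmono h1]

lemma walk_split (E : Finset (Sym2 V)) {F : Finset (Sym2 V)} {u v : V}
    (p : (fromEdgeSet (F : Set (Sym2 V))).Walk u v) :
    (fromEdgeSet ((F ∩ E : Finset (Sym2 V)) : Set (Sym2 V))).Reachable u v ∨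
    ∃ a b : V, s(a, b) ∈ F ∧ s(a, b) ∉ E ∧
      (fromEdgeSet ((F ∩ E : Finset (Sym2 V)) : Set (Sym2 V))).Reachable u a ∧
      (fromEdgeSet (F : Set (Sym2 V))).Reachable b v := by
  induction p with
  | nil => exact Or.inl (Reachable.refl _)
  | @cons u w v h q ih =>
    rw [fromEdgeSet_adj] at h
    obtain ⟨hmem, hne⟩ := h
    by_cases hE : s(u, w) ∈ E
    · have hadj : (fromEdgeSet ((F ∩ E : Finset (Sym2 V)) : Set (Sym2 V))).Adj u w := by
        rw [fromEdgeSet_adj]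
        exact ⟨by simp [Finset.mem_inter, Finset.mem_coe.1 hmem, hE], hne⟩
      rcases ih with hr | ⟨a, b, h1, h2, h3, h4⟩
      · exact Or.inl (hadj.reachable.trans hr)
      · exact Or.inr ⟨a, b, h1, h2, hadj.reachable.trans h3, h4⟩
    · exact Or.inr ⟨u, w, hmem, hE, Reachable.refl _, q.reachable⟩

/-- Coverage: a connection in a sample of `E ∪ D` yields either a pure-`E` connection or
endpoints of present `D`-edges close to `u` and `v`. -/
lemma reach_cover (E D : Finset (Sym2 V)) {F : Finset (Sym2 V)} (hF : F ⊆ E ∪ D)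
    {u v : V} (h : (fromEdgeSet (F : Set (Sym2 V))).Reachable u v) :
    (fromEdgeSet ((F ∩ E : Finset (Sym2 V)) : Set (Sym2 V))).Reachable u v ∨
    ∃ e₁ ∈ D, ∃ e₂ ∈ D, e₁ ∈ F ∧ e₂ ∈ F ∧ ∃ x y : V, x ∈ e₁ ∧ y ∈ e₂ ∧
      (fromEdgeSet ((F ∩ E : Finset (Sym2 V)) : Set (Sym2 V))).Reachable u x ∧
      (fromEdgeSet ((F ∩ E : Finset (Sym2 V)) : Set (Sym2 V))).Reachable y v := by
  obtain ⟨p⟩ := h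
  rcases walk_split E p with hr | ⟨a, b, h1, h2, h3, h4⟩
  · exact Or.inl hr
  · have he₁D : s(a, b) ∈ D := by
      rcases Finset.mem_union.1 (hF h1) with h | h
      · exact absurd h h2
      · exact h
    obtain ⟨q⟩ := h4.symm
    rcases walk_split E q with hr | ⟨c, d, g1, g2, g3, g4⟩
    · -- v reaches b in F ∩ E : use e₂ = e₁ = s(a,b), y = b
      exact Or.inr ⟨s(a, b), he₁D, s(a, b), he₁D, h1, h1, a, b, Sym2.mem_mk_left a b,
        Sym2.mem_mk_right a b, h3, hr.symm⟩
    · have he₂D : s(c, d) ∈ D := by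
        rcases Finset.mem_union.1 (hF g1) with h | h
        · exact absurd h g2
        · exact h
      exact Or.inr ⟨s(a, b), he₁D, s(c, d), he₂D, h1, g1, a, c, Sym2.mem_mk_left a b,
        Sym2.mem_mk_left c d, h3, g3.symm⟩


lemma prE_or_le (hα0 : 0 ≤ α) (hα1 : α ≤ 1) (s : Finset (Sym2 V))
    (P Q : Finset (Sym2 V) → Prop) :
    prE s α (fun F => P F ∨ Q F) ≤ prE s α P + prE s α Q := by
  rw [prE, prE, prE, ← Finset.sum_add_distrib]
  refine Finset.sum_le_sum fun F _ => ?_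
  have hw := w_nonneg (α := α) hα0 hα1 s F
  by_cases hP : P F
  · rw [if_pos (Or.inl hP), if_pos hP]
    split
    · linarith
    · linarith
  · by_cases hQ : Q F
    · rw [if_pos (Or.inr hQ), if_neg hP, if_pos hQ, zero_add]
    · rw [if_neg (by tauto), if_neg hP, if_neg hQ, zero_add]

lemma prox_eq_prE (E' : Finset (Sym2 V)) (u v : V) :
    prox E' α u v
      = prE E' α (fun F => (SimpleGraph.fromEdgeSet (F : Set (Sym2 V))).Reachable u v) := by
  refine Finset.sum_congr rfl fun F _ => ?_
  by_cases h : (SimpleGraph.fromEdgeSet (F : Set (Sym2 V))).Reachable u v <;> simp [h]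

lemma prox_nonneg (hα0 : 0 ≤ α) (hα1 : α ≤ 1) (E' : Finset (Sym2 V)) (u v : V) :
    0 ≤ prox E' α u v := by
  rw [prox_eq_prE]; exact prE_nonneg hα0 hα1 _ _

lemma prox_le_one (hα0 : 0 ≤ α) (hα1 : α ≤ 1) (E' : Finset (Sym2 V)) (u v : V) :
    prox E' α u v ≤ 1 := by
  rw [prox_eq_prE]; exact prE_le_one hα0 hα1 _ _

lemma prox_self (E' : Finset (Sym2 V)) (w : V) : prox E' α w w = 1 := by
  rw [prox_eq_prE]
  exact prE_true _ fun F _ => SimpleGraph.Reachable.refl w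

lemma reach_finset_mono {G G' : Finset (Sym2 V)} (h : G ⊆ G') {a b : V}
    (hr : (SimpleGraph.fromEdgeSet (G : Set (Sym2 V))).Reachable a b) :
    (SimpleGraph.fromEdgeSet (G' : Set (Sym2 V))).Reachable a b :=
  hr.mono (SimpleGraph.fromEdgeSet_mono (Finset.coe_subset.2 h))

/-- Witness via a single original optimal edge containing both contact vertices. -/
lemma edge_witness (hα0 : 0 ≤ α) (hα1 : α ≤ 1) {E : Finset (Sym2 V)} {e : Sym2 V}
    (heE : e ∉ E) {u v x y : V} (hx : x ∈ e) (hy : y ∈ e) :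
    α ^ 1 * prE E α (fun G => (SimpleGraph.fromEdgeSet (G : Set (Sym2 V))).Reachable u x ∧
        (SimpleGraph.fromEdgeSet (G : Set (Sym2 V))).Reachable y v)
      ≤ prox (E ∪ {e}) α u v := by
  have hfac := prE_factor (α := α) (E := E) (D := {e})
    (fun d hd => by rwa [Finset.mem_singleton.1 hd]) (Finset.Subset.refl {e})
    (fun G => (SimpleGraph.fromEdgeSet (G : Set (Sym2 V))).Reachable u x ∧
      (SimpleGraph.fromEdgeSet (G : Set (Sym2 V))).Reachable y v)
  rw [Finset.card_singleton] at hfac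
  rw [← hfac, prox_eq_prE]
  refine prE_mono hα0 hα1 _ fun F hF h => ?_
  obtain ⟨⟨hux, hyv⟩, heF⟩ := h
  have heF' : e ∈ F := heF (Finset.mem_singleton_self e)
  have hxy : (SimpleGraph.fromEdgeSet (F : Set (Sym2 V))).Reachable x y := by
    by_cases hne : x = y
    · subst hne; exact SimpleGraph.Reachable.refl x
    · have he' : e = s(x, y) := (Sym2.mem_and_mem_iff hne).1 ⟨hx, hy⟩
      refine SimpleGraph.Adj.reachable ?_
      rw [SimpleGraph.fromEdgeSet_adj]
      exact ⟨by rw [← he']; exact Finset.mem_coe.2 heF', hne⟩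
  have h1 := reach_finset_mono (Finset.inter_subset_left) hux
  have h2 := reach_finset_mono (Finset.inter_subset_left) hyv
  exact (h1.trans hxy).trans h2

/-- Witness via (at most two) hub edges. -/
lemma hub_witness (hα0 : 0 ≤ α) (hα1 : α ≤ 1) {E S : Finset (Sym2 V)}
    (hSE : ∀ e ∈ S, e ∉ E) {u v x y h₀ : V}
    (hx : s(x, h₀) ∉ E → s(x, h₀) ∈ S) (hy : s(y, h₀) ∉ E → s(y, h₀) ∈ S) :
    ∃ W ⊆ S, W.card ≤ 3 ∧
      α ^ 2 * prE E α (fun G => (SimpleGraph.fromEdgeSet (G : Set (Sym2 V))).Reachable u x ∧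
          (SimpleGraph.fromEdgeSet (G : Set (Sym2 V))).Reachable y v)
        ≤ prox (E ∪ W) α u v := by
  classical
  set A : Finset (Sym2 V) → Prop :=
    fun G => (SimpleGraph.fromEdgeSet (G : Set (Sym2 V))).Reachable u x ∧
      (SimpleGraph.fromEdgeSet (G : Set (Sym2 V))).Reachable y v with hA
  have hmono : ∀ (G G' : Finset (Sym2 V)), G ⊆ G' → A G → A G' := by
    rintro G G' hsub ⟨h1, h2⟩
    exact ⟨reach_finset_mono hsub h1, reach_finset_mono hsub h2⟩
  set Q : Finset (Sym2 V) → Prop :=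
    fun G => A G ∧ (s(x, h₀) ∈ E → s(x, h₀) ∈ G) ∧ (s(y, h₀) ∈ E → s(y, h₀) ∈ G) with hQ
  set cx : ℕ := if s(x, h₀) ∈ E then 1 else 0 with hcx
  set cy : ℕ := if s(y, h₀) ∈ E then 1 else 0 with hcy
  have claim1 : α ^ (cx + cy) * prE E α A ≤ prE E α Q := by
    by_cases hxE : s(x, h₀) ∈ E <;> by_cases hyE : s(y, h₀) ∈ E
    · have c1 : α * prE E α A ≤ prE E α (fun G => A G ∧ s(x, h₀) ∈ G) :=
        prE_cond_edge hα0 hα1 hxE hmono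
      have hmono2 : ∀ (G G' : Finset (Sym2 V)), G ⊆ G' →
          (A G ∧ s(x, h₀) ∈ G) → (A G' ∧ s(x, h₀) ∈ G') := by
        rintro G G' hsub ⟨h1, h2⟩
        exact ⟨hmono G G' hsub h1, hsub h2⟩
      have c2 := prE_cond_edge hα0 hα1 hyE hmono2
      have c3 : prE E α (fun G => (A G ∧ s(x, h₀) ∈ G) ∧ s(y, h₀) ∈ G) = prE E α Q := by
        refine prE_congr fun G _ => ?_
        rw [hQ]
        constructor
        · rintro ⟨⟨h1, h2⟩, h3⟩
          exact ⟨h1, fun _ => h2, fun _ => h3⟩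
        · rintro ⟨h1, h2, h3⟩
          exact ⟨⟨h1, h2 hxE⟩, h3 hyE⟩
      have c4 := mul_le_mul_of_nonneg_left c1 hα0
      rw [hcx, hcy, if_pos hxE, if_pos hyE]
      calc α ^ (1 + 1) * prE E α A = α * (α * prE E α A) := by ring
        _ ≤ α * prE E α (fun G => A G ∧ s(x, h₀) ∈ G) := c4
        _ ≤ prE E α (fun G => (A G ∧ s(x, h₀) ∈ G) ∧ s(y, h₀) ∈ G) := c2
        _ = prE E α Q := c3
    · have c1 : α * prE E α A ≤ prE E α (fun G => A G ∧ s(x, h₀) ∈ G) :=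
        prE_cond_edge hα0 hα1 hxE hmono
      have c3 : prE E α (fun G => A G ∧ s(x, h₀) ∈ G) = prE E α Q := by
        refine prE_congr fun G _ => ?_
        rw [hQ]
        constructor
        · rintro ⟨h1, h2⟩
          exact ⟨h1, fun _ => h2, fun h => absurd h hyE⟩
        · rintro ⟨h1, h2, -⟩
          exact ⟨h1, h2 hxE⟩
      rw [hcx, hcy, if_pos hxE, if_neg hyE]
      calc α ^ (1 + 0) * prE E α A = α * prE E α A := by ring
        _ ≤ prE E α (fun G => A G ∧ s(x, h₀) ∈ G) := c1
        _ = prE E α Q := c3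
    · have c1 : α * prE E α A ≤ prE E α (fun G => A G ∧ s(y, h₀) ∈ G) :=
        prE_cond_edge hα0 hα1 hyE hmono
      have c3 : prE E α (fun G => A G ∧ s(y, h₀) ∈ G) = prE E α Q := by
        refine prE_congr fun G _ => ?_
        rw [hQ]
        constructor
        · rintro ⟨h1, h2⟩
          exact ⟨h1, fun h => absurd h hxE, fun _ => h2⟩
        · rintro ⟨h1, -, h2⟩
          exact ⟨h1, h2 hyE⟩
      rw [hcx, hcy, if_neg hxE, if_pos hyE]
      calc α ^ (0 + 1) * prE E α A = α * prE E α A := by ring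
        _ ≤ prE E α (fun G => A G ∧ s(y, h₀) ∈ G) := c1
        _ = prE E α Q := c3
    · have c3 : prE E α A = prE E α Q := by
        refine prE_congr fun G _ => ?_
        rw [hQ]
        constructor
        · intro h1
          exact ⟨h1, fun h => absurd h hxE, fun h => absurd h hyE⟩
        · rintro ⟨h1, -, -⟩
          exact h1
      rw [hcx, hcy, if_neg hxE, if_neg hyE]
      simpa using c3.le
  set Wx : Finset (Sym2 V) := if x = h₀ ∨ s(x, h₀) ∈ E then ∅ else {s(x, h₀)} with hWx
  set Wy : Finset (Sym2 V) := if y = h₀ ∨ s(y, h₀) ∈ E then ∅ else {s(y, h₀)} with hWy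
  set W : Finset (Sym2 V) := Wx ∪ Wy with hW
  have hWxS : Wx ⊆ S := by
    rw [hWx]
    split_ifs with hc
    · exact Finset.empty_subset S
    · push_neg at hc
      exact Finset.singleton_subset_iff.2 (hx hc.2)
  have hWyS : Wy ⊆ S := by
    rw [hWy]
    split_ifs with hc
    · exact Finset.empty_subset S
    · push_neg at hc
      exact Finset.singleton_subset_iff.2 (hy hc.2)
  have hWS : W ⊆ S := Finset.union_subset hWxS hWyS
  have hWxc : Wx.card + cx ≤ 1 := by
    rw [hWx, hcx]
    split_ifs with h1 h2 <;> simp_all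
  have hWyc : Wy.card + cy ≤ 1 := by
    rw [hWy, hcy]
    split_ifs with h1 h2 <;> simp_all
  have hWcard : W.card ≤ Wx.card + Wy.card := Finset.card_union_le Wx Wy
  have hWE : ∀ d ∈ W, d ∉ E := fun d hd => hSE d (hWS hd)
  have hfac := prE_factor (α := α) (E := E) (D := W) hWE (Finset.Subset.refl W) Q
  have himpl : ∀ F ⊆ E ∪ W, (Q (F ∩ E) ∧ W ⊆ F) →
      (SimpleGraph.fromEdgeSet (F : Set (Sym2 V))).Reachable u v := by
    rintro F hF ⟨⟨⟨hux, hyv⟩, hQx, hQy⟩, hWF⟩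
    have hxh : (SimpleGraph.fromEdgeSet (F : Set (Sym2 V))).Reachable x h₀ := by
      by_cases hxh0 : x = h₀
      · subst hxh0; exact SimpleGraph.Reachable.refl x
      · have hmemF : s(x, h₀) ∈ F := by
          by_cases hxE : s(x, h₀) ∈ E
          · exact Finset.mem_of_mem_inter_left (hQx hxE)
          · refine hWF (Finset.mem_union_left _ ?_)
            rw [hWx, if_neg (by push_neg; exact ⟨hxh0, hxE⟩)]
            exact Finset.mem_singleton_self _
        refine SimpleGraph.Adj.reachable ?_
        rw [SimpleGraph.fromEdgeSet_adj]
        exact ⟨Finset.mem_coe.2 hmemF, hxh0⟩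
    have hyh : (SimpleGraph.fromEdgeSet (F : Set (Sym2 V))).Reachable y h₀ := by
      by_cases hyh0 : y = h₀
      · subst hyh0; exact SimpleGraph.Reachable.refl y
      · have hmemF : s(y, h₀) ∈ F := by
          by_cases hyE : s(y, h₀) ∈ E
          · exact Finset.mem_of_mem_inter_left (hQy hyE)
          · refine hWF (Finset.mem_union_right _ ?_)
            rw [hWy, if_neg (by push_neg; exact ⟨hyh0, hyE⟩)]
            exact Finset.mem_singleton_self _
        refine SimpleGraph.Adj.reachable ?_
        rw [SimpleGraph.fromEdgeSet_adj]
        exact ⟨Finset.mem_coe.2 hmemF, hyh0⟩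
    have h1 := reach_finset_mono (Finset.inter_subset_left) hux
    have h2 := reach_finset_mono (Finset.inter_subset_left) hyv
    exact ((h1.trans hxh).trans hyh.symm).trans h2
  have hW3 : W.card ≤ 3 := by omega
  refine ⟨W, hWS, hW3, ?_⟩
  have step1 : α ^ 2 * prE E α A ≤ α ^ (W.card + (cx + cy)) * prE E α A := by
    refine mul_le_mul_of_nonneg_right ?_ (prE_nonneg hα0 hα1 _ _)
    exact pow_le_pow_of_le_one hα0 hα1 (by omega)
  have step2 : α ^ (W.card + (cx + cy)) * prE E α A ≤ α ^ W.card * prE E α Q := by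
    rw [pow_add, mul_assoc]
    exact mul_le_mul_of_nonneg_left claim1 (pow_nonneg hα0 _)
  have step3 : α ^ W.card * prE E α Q ≤ prox (E ∪ W) α u v := by
    rw [← hfac, prox_eq_prE]
    exact prE_mono hα0 hα1 _ himpl
  exact (step1.trans step2).trans step3

/-- constant-witness existence (part i). -/
theorem constant_witness_existence_i
    (E : Finset (Sym2 V)) (α : ℝ) (hα0 : 0 ≤ α) (hα1 : α ≤ 1)
    (k : ℕ) (hk : 2 ≤ k) :
    ∃ S : Finset (Sym2 V), (∀ e ∈ S, e ∉ E) ∧ S.card ≤ 7 * k - 6 ∧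
      ∀ u v : V, ∃ W ⊆ S, W.card ≤ 3 ∧
        4 * optBroadcast E α k / (12 * (k : ℝ) ^ 4 + 3 * (k : ℝ) ^ 2) ≤
          prox (E ∪ W) α u v := by
  classical
  have hk2 : (2:ℝ) ≤ (k:ℝ) := by exact_mod_cast hk
  have hDpos : (0:ℝ) < 12 * (k : ℝ) ^ 4 + 3 * (k : ℝ) ^ 2 := by nlinarith
  cases isEmpty_or_nonempty V with
  | inl hemp =>
    exact ⟨∅, by simp, by simp, fun u _ => isEmptyElim u⟩
  | inr hne =>
  have hsub_ne : Nonempty {F : Finset (Sym2 V) // F.card ≤ k ∧ ∀ e ∈ F, e ∉ E} :=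
    ⟨⟨∅, by simp⟩⟩
  obtain ⟨Fs, hFs⟩ := Finite.exists_max
    (fun F : {F : Finset (Sym2 V) // F.card ≤ k ∧ ∀ e ∈ F, e ∉ E} => broadcast (E ∪ F.1) α)
  have hBle : optBroadcast E α k ≤ broadcast (E ∪ Fs.1) α := ciSup_le hFs
  have hbroad_nonneg : ∀ F : {F : Finset (Sym2 V) // F.card ≤ k ∧ ∀ e ∈ F, e ∉ E},
      0 ≤ broadcast (E ∪ F.1) α :=
    fun F => Real.iInf_nonneg fun p => prox_nonneg hα0 hα1 _ _ _
  have hB0 : 0 ≤ optBroadcast E α k := by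
    have h1 := le_ciSup (Finite.bddAbove_range
      (fun F : {F : Finset (Sym2 V) // F.card ≤ k ∧ ∀ e ∈ F, e ∉ E} => broadcast (E ∪ F.1) α))
      (⟨∅, by simp⟩ : {F : Finset (Sym2 V) // F.card ≤ k ∧ ∀ e ∈ F, e ∉ E})
    exact le_trans (hbroad_nonneg _) h1
  have hbroad_le_one : broadcast (E ∪ Fs.1) α ≤ 1 := by
    rcases isEmpty_or_nonempty {p : V × V // p.1 ≠ p.2} with hpe | hpne
    · rw [broadcast, iInf, Set.range_eq_empty, Real.sInf_empty]; norm_num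
    · obtain ⟨p⟩ := hpne
      refine le_trans (ciInf_le ⟨0, ?_⟩ p) (prox_le_one hα0 hα1 _ _ _)
      rintro z ⟨q, rfl⟩
      exact prox_nonneg hα0 hα1 _ _ _
  have hB1 : optBroadcast E α k ≤ 1 := hBle.trans hbroad_le_one
  set t : ℝ := 4 * optBroadcast E α k / (12 * (k : ℝ) ^ 4 + 3 * (k : ℝ) ^ 2) with ht
  have ht0 : 0 ≤ t := div_nonneg (by linarith) hDpos.le
  have ht1 : t ≤ 1 := by
    rw [ht, div_le_one hDpos]; nlinarith
  -- construction of S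
  set h₀ : V := Classical.arbitrary V with hh₀
  set T : Finset (Sym2 V × V) :=
    Fs.1.biUnion (fun e => {(e, (Quot.out e).1), (e, (Quot.out e).2)}) with hTdef
  have hTspec : ∀ p ∈ T, p.1 ∈ Fs.1 ∧ p.2 ∈ p.1 := by
    intro p hp
    rw [hTdef, Finset.mem_biUnion] at hp
    obtain ⟨e, he, hpe⟩ := hp
    rcases Finset.mem_insert.1 hpe with rfl | hpe'
    · exact ⟨he, Sym2.out_fst_mem e⟩
    · rw [Finset.mem_singleton] at hpe'
      subst hpe'
      exact ⟨he, Sym2.out_snd_mem e⟩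
  have hTmem : ∀ e ∈ Fs.1, ∀ x, x ∈ e → (e, x) ∈ T := by
    intro e he x hx
    have heq : e = s((Quot.out e).1, (Quot.out e).2) := by conv_lhs => rw [← Quot.out_eq e]
    rw [heq, Sym2.mem_iff] at hx
    refine Finset.mem_biUnion.2 ⟨e, he, ?_⟩
    rcases hx with rfl | rfl
    · exact Finset.mem_insert_self _ _
    · exact Finset.mem_insert_of_mem (Finset.mem_singleton_self _)
  have hTcard : T.card ≤ 2 * k := by
    calc T.card ≤ ∑ e ∈ Fs.1, ({(e, (Quot.out e).1), (e, (Quot.out e).2)} : Finset (Sym2 V × V)).card :=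
          Finset.card_biUnion_le
      _ ≤ ∑ _e ∈ Fs.1, 2 := Finset.sum_le_sum fun e _ =>
          le_trans (Finset.card_insert_le _ _) (by simp)
      _ = Fs.1.card * 2 := by rw [Finset.sum_const, smul_eq_mul]
      _ ≤ k * 2 := Nat.mul_le_mul_right 2 Fs.2.1
      _ = 2 * k := Nat.mul_comm k 2
  set H : Finset (Sym2 V) :=
    (T.image (fun p => s(p.2, h₀))).filter (fun e => e ∉ E) with hHdef
  set S : Finset (Sym2 V) := Fs.1 ∪ H with hSdef
  have hSE : ∀ e ∈ S, e ∉ E := by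
    intro e he
    rcases Finset.mem_union.1 he with h | h
    · exact Fs.2.2 e h
    · exact (Finset.mem_filter.1 h).2
  have hHS : ∀ p ∈ T, s(p.2, h₀) ∉ E → s(p.2, h₀) ∈ S := by
    intro p hp hnot
    refine Finset.mem_union_right _ (Finset.mem_filter.2 ⟨?_, hnot⟩)
    exact Finset.mem_image.2 ⟨p, hp, rfl⟩
  have hScard : S.card ≤ 7 * k - 6 := by
    have h1 : S.card ≤ Fs.1.card + H.card := Finset.card_union_le _ _
    have h2 : H.card ≤ T.card := le_trans (Finset.card_filter_le _ _) Finset.card_image_le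
    have h3 := Fs.2.1
    omega
  refine ⟨S, hSE, hScard, fun u v => ?_⟩
  by_cases huv : u = v
  · subst huv
    refine ⟨∅, Finset.empty_subset _, by simp, ?_⟩
    rw [Finset.union_empty, prox_self]
    exact ht1
  by_contra hcon
  push_neg at hcon
  have hproxE : prox E α u v < t := by
    have := hcon ∅ (Finset.empty_subset S) (by simp)
    rwa [Finset.union_empty] at this
  -- step 1: optimum ≤ prox in the optimally augmented graph
  have chain1 : optBroadcast E α k ≤ prox (E ∪ Fs.1) α u v := by
    refine hBle.trans ?_
    have hbdd : BddBelow (Set.range fun p : {p : V × V // p.1 ≠ p.2} =>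
        prox (E ∪ Fs.1) α p.1.1 p.1.2) := by
      refine ⟨0, ?_⟩
      rintro z ⟨q, rfl⟩
      exact prox_nonneg hα0 hα1 _ _ _
    exact ciInf_le hbdd ⟨(u, v), huv⟩
  -- step 2: union bound decomposition
  have cover : ∀ F ⊆ E ∪ Fs.1, (SimpleGraph.fromEdgeSet (F : Set (Sym2 V))).Reachable u v →
      (((SimpleGraph.fromEdgeSet ((F ∩ E : Finset (Sym2 V)) : Set (Sym2 V))).Reachable u v
          ∧ (∅ : Finset (Sym2 V)) ⊆ F) ∨
        (∃ i ∈ T ×ˢ T,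
          ((SimpleGraph.fromEdgeSet ((F ∩ E : Finset (Sym2 V)) : Set (Sym2 V))).Reachable u i.1.2
            ∧ (SimpleGraph.fromEdgeSet ((F ∩ E : Finset (Sym2 V)) : Set (Sym2 V))).Reachable i.2.2 v)
            ∧ ({i.1.1, i.2.1} : Finset (Sym2 V)) ⊆ F)) := by
    intro F hF hreach
    rcases reach_cover E Fs.1 hF hreach with h | ⟨e₁, he₁, e₂, he₂, hf1, hf2, x, y, hx, hy, r1, r2⟩
    · exact Or.inl ⟨h, Finset.empty_subset F⟩
    · refine Or.inr ⟨((e₁, x), (e₂, y)),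
        Finset.mem_product.2 ⟨hTmem e₁ he₁ x hx, hTmem e₂ he₂ y hy⟩, ⟨r1, r2⟩, ?_⟩
      exact Finset.insert_subset hf1 (Finset.singleton_subset_iff.2 hf2)
  have ub : prox (E ∪ Fs.1) α u v ≤ prox E α u v + ∑ i ∈ T ×ˢ T,
      prE (E ∪ Fs.1) α (fun F =>
        ((SimpleGraph.fromEdgeSet ((F ∩ E : Finset (Sym2 V)) : Set (Sym2 V))).Reachable u i.1.2
          ∧ (SimpleGraph.fromEdgeSet ((F ∩ E : Finset (Sym2 V)) : Set (Sym2 V))).Reachable i.2.2 v)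
          ∧ ({i.1.1, i.2.1} : Finset (Sym2 V)) ⊆ F) := by
    rw [prox_eq_prE]
    have s1 : prE (E ∪ Fs.1) α
        (fun F => (SimpleGraph.fromEdgeSet (F : Set (Sym2 V))).Reachable u v)
        ≤ prE (E ∪ Fs.1) α (fun F =>
          (((SimpleGraph.fromEdgeSet ((F ∩ E : Finset (Sym2 V)) : Set (Sym2 V))).Reachable u v
            ∧ (∅ : Finset (Sym2 V)) ⊆ F) ∨
          (∃ i ∈ T ×ˢ T,
            ((SimpleGraph.fromEdgeSet ((F ∩ E : Finset (Sym2 V)) : Set (Sym2 V))).Reachable u i.1.2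
              ∧ (SimpleGraph.fromEdgeSet ((F ∩ E : Finset (Sym2 V)) : Set (Sym2 V))).Reachable i.2.2 v)
              ∧ ({i.1.1, i.2.1} : Finset (Sym2 V)) ⊆ F))) :=
      prE_mono hα0 hα1 _ cover
    have s2 := prE_or_le hα0 hα1 (E ∪ Fs.1)
      (fun F => (SimpleGraph.fromEdgeSet ((F ∩ E : Finset (Sym2 V)) : Set (Sym2 V))).Reachable u v
        ∧ (∅ : Finset (Sym2 V)) ⊆ F)
      (fun F => ∃ i ∈ T ×ˢ T,
        ((SimpleGraph.fromEdgeSet ((F ∩ E : Finset (Sym2 V)) : Set (Sym2 V))).Reachable u i.1.2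
          ∧ (SimpleGraph.fromEdgeSet ((F ∩ E : Finset (Sym2 V)) : Set (Sym2 V))).Reachable i.2.2 v)
          ∧ ({i.1.1, i.2.1} : Finset (Sym2 V)) ⊆ F)
    have s3 : prE (E ∪ Fs.1) α (fun F => ∃ i ∈ T ×ˢ T,
        ((SimpleGraph.fromEdgeSet ((F ∩ E : Finset (Sym2 V)) : Set (Sym2 V))).Reachable u i.1.2
          ∧ (SimpleGraph.fromEdgeSet ((F ∩ E : Finset (Sym2 V)) : Set (Sym2 V))).Reachable i.2.2 v)
          ∧ ({i.1.1, i.2.1} : Finset (Sym2 V)) ⊆ F)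
        ≤ ∑ i ∈ T ×ˢ T, prE (E ∪ Fs.1) α (fun F =>
          ((SimpleGraph.fromEdgeSet ((F ∩ E : Finset (Sym2 V)) : Set (Sym2 V))).Reachable u i.1.2
            ∧ (SimpleGraph.fromEdgeSet ((F ∩ E : Finset (Sym2 V)) : Set (Sym2 V))).Reachable i.2.2 v)
            ∧ ({i.1.1, i.2.1} : Finset (Sym2 V)) ⊆ F) :=
      prE_union_bound hα0 hα1 _ (fun F _ h => h)
    have s4 : prE (E ∪ Fs.1) α
        (fun F => (SimpleGraph.fromEdgeSet ((F ∩ E : Finset (Sym2 V)) : Set (Sym2 V))).Reachable u v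
          ∧ (∅ : Finset (Sym2 V)) ⊆ F) = prox E α u v := by
      have hfac := prE_factor (α := α) (E := E) (D := Fs.1) Fs.2.2 (Finset.empty_subset Fs.1)
        (fun G => (SimpleGraph.fromEdgeSet (G : Set (Sym2 V))).Reachable u v)
      rw [Finset.card_empty, pow_zero, one_mul] at hfac
      rw [hfac, prox_eq_prE]
    linarith
  -- step 3: each summand is small
  have key : ∀ i ∈ T ×ˢ T,
      prE (E ∪ Fs.1) α (fun F =>
        ((SimpleGraph.fromEdgeSet ((F ∩ E : Finset (Sym2 V)) : Set (Sym2 V))).Reachable u i.1.2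
          ∧ (SimpleGraph.fromEdgeSet ((F ∩ E : Finset (Sym2 V)) : Set (Sym2 V))).Reachable i.2.2 v)
          ∧ ({i.1.1, i.2.1} : Finset (Sym2 V)) ⊆ F) ≤ t := by
    intro i hi
    obtain ⟨hi1, hi2⟩ := Finset.mem_product.1 hi
    obtain ⟨he1, hx1⟩ := hTspec _ hi1
    obtain ⟨he2, hy2⟩ := hTspec _ hi2
    have hfac := prE_factor (α := α) (E := E) (D := Fs.1) Fs.2.2
      (D' := {i.1.1, i.2.1}) (Finset.insert_subset he1 (Finset.singleton_subset_iff.2 he2))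
      (fun G => (SimpleGraph.fromEdgeSet (G : Set (Sym2 V))).Reachable u i.1.2
        ∧ (SimpleGraph.fromEdgeSet (G : Set (Sym2 V))).Reachable i.2.2 v)
    rw [hfac]
    by_cases he : i.1.1 = i.2.1
    · have hcard1 : ({i.1.1, i.2.1} : Finset (Sym2 V)).card = 1 := by rw [← he]; simp
      rw [hcard1]
      have hy2' : i.2.2 ∈ i.1.1 := by rw [he]; exact hy2
      have hwit := edge_witness (α := α) hα0 hα1 (Fs.2.2 _ he1) (u := u) (v := v) hx1 hy2'
      refine le_of_lt (hwit.trans_lt ?_)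
      refine hcon {i.1.1} ?_ (by simp)
      exact Finset.singleton_subset_iff.2 (Finset.mem_union_left _ he1)
    · have hcard2 : ({i.1.1, i.2.1} : Finset (Sym2 V)).card = 2 := Finset.card_pair he
      rw [hcard2]
      obtain ⟨W, hWS, hW3, hwit⟩ := hub_witness (α := α) (h₀ := h₀) hα0 hα1 hSE
        (u := u) (v := v) (x := i.1.2) (y := i.2.2)
        (fun hnot => hHS _ hi1 hnot) (fun hnot => hHS _ hi2 hnot)
      exact le_of_lt (hwit.trans_lt (hcon W hWS hW3))
  -- step 4: sum the bounds
  have sumsmall : (∑ i ∈ T ×ˢ T,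
      prE (E ∪ Fs.1) α (fun F =>
        ((SimpleGraph.fromEdgeSet ((F ∩ E : Finset (Sym2 V)) : Set (Sym2 V))).Reachable u i.1.2
          ∧ (SimpleGraph.fromEdgeSet ((F ∩ E : Finset (Sym2 V)) : Set (Sym2 V))).Reachable i.2.2 v)
          ∧ ({i.1.1, i.2.1} : Finset (Sym2 V)) ⊆ F)) ≤ 4 * (k:ℝ)^2 * t := by
    refine le_trans (Finset.sum_le_card_nsmul _ _ t key) ?_
    rw [nsmul_eq_mul]
    have hc : ((T ×ˢ T).card : ℝ) ≤ 4 * (k:ℝ)^2 := by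
      have h1 : (T ×ˢ T).card = T.card * T.card := by
        rw [Finset.card_product]
      have h2 : (T ×ˢ T).card ≤ (2*k) * (2*k) := by
        rw [h1]; exact Nat.mul_le_mul hTcard hTcard
      calc ((T ×ˢ T).card : ℝ) ≤ ((2*k) * (2*k) : ℕ) := by exact_mod_cast h2
        _ = 4 * (k:ℝ)^2 := by push_cast; ring
    exact mul_le_mul_of_nonneg_right hc ht0
  -- final contradiction
  have hfinal : optBroadcast E α k < t + 4 * (k:ℝ)^2 * t := by
    calc optBroadcast E α k ≤ prox (E ∪ Fs.1) α u v := chain1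
      _ ≤ prox E α u v + ∑ i ∈ T ×ˢ T,
          prE (E ∪ Fs.1) α (fun F =>
            ((SimpleGraph.fromEdgeSet ((F ∩ E : Finset (Sym2 V)) : Set (Sym2 V))).Reachable u i.1.2
              ∧ (SimpleGraph.fromEdgeSet ((F ∩ E : Finset (Sym2 V)) : Set (Sym2 V))).Reachable i.2.2 v)
              ∧ ({i.1.1, i.2.1} : Finset (Sym2 V)) ⊆ F) := ub
      _ ≤ prox E α u v + 4 * (k:ℝ)^2 * t := by linarith
      _ < t + 4 * (k:ℝ)^2 * t := by linarith
  have hBD : t * (12 * (k : ℝ) ^ 4 + 3 * (k : ℝ) ^ 2) = 4 * optBroadcast E α k := by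
    rw [ht]; field_simp
  have hq : (4:ℝ) ≤ (k:ℝ)^2 := by nlinarith
  have hfactor : (0:ℝ) ≤ optBroadcast E α k * (12*(k:ℝ)^4 - 13*(k:ℝ)^2 - 4) := by
    refine mul_nonneg hB0 ?_
    nlinarith
  have hX := mul_lt_mul_of_pos_right hfinal hDpos
  have hBD2 : (4*(k:ℝ)^2) * (t * (12 * (k : ℝ) ^ 4 + 3 * (k : ℝ) ^ 2))
      = (4*(k:ℝ)^2) * (4 * optBroadcast E α k) := by rw [hBD]
  nlinarith [hX, hBD, hBD2, hfactor]
end
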